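/- arXiv:0902.0937 — 5 statements merged into one kernel-verified Lean document; each statement's English description precedes it below -/
import Mathlib

section
/- Let A and B be MR-subalgebras of 𝓛ₙ with tp(A) = tp(B). Then there exists an automorphism φ of 𝓛ₙ with φ[A] = B. -/
@[ext] structure Cube (n : ℕ) where
  pos : Finset (Fin n)
  neg : Finset (Fin n)
  disj : Disjoint pos neg

namespace Cube
variable {n : ℕ}

instance : PartialOrder (Cube n) where
  le x y := y.pos ⊆ x.pos ∧ y.neg ⊆ x.neg
  le_refl x := ⟨subset_rfl, subset_rfl⟩
  le_trans x y z h₁ h₂ := ⟨h₂.1.trans h₁.1, h₂.2.trans h₁.2⟩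
  le_antisymm x y h₁ h₂ :=
    Cube.ext (subset_antisymm h₂.1 h₁.1) (subset_antisymm h₂.2 h₁.2)

instance : OrderTop (Cube n) where
  top := ⟨∅, ∅, by simp⟩
  le_top x := ⟨Finset.empty_subset _, Finset.empty_subset _⟩

instance : SemilatticeSup (Cube n) where
  sup x y := ⟨x.pos ∩ y.pos, x.neg ∩ y.neg,
    x.disj.mono Finset.inter_subset_left Finset.inter_subset_left⟩
  le_sup_left x y := ⟨Finset.inter_subset_left, Finset.inter_subset_left⟩
  le_sup_right x y := ⟨Finset.inter_subset_right, Finset.inter_subset_right⟩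
  sup_le x y z hx hy := ⟨Finset.subset_inter hx.1 hy.1, Finset.subset_inter hx.2 hy.2⟩

/-- The reflection `Δ(x, y)` of `y` through the centre of `x`. -/
def delta (x y : Cube n) : Cube n :=
  ⟨x.pos ∪ (y.neg \ x.neg), x.neg ∪ (y.pos \ x.pos), by
    simp only [Finset.disjoint_union_left, Finset.disjoint_union_right]
    refine ⟨⟨x.disj, Finset.sdiff_disjoint⟩, Finset.disjoint_sdiff, ?_⟩
    exact y.disj.symm.mono Finset.sdiff_subset Finset.sdiff_subset⟩

lemma delta_le (x y : Cube n) : delta x y ≤ x :=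
  ⟨Finset.subset_union_left, Finset.subset_union_left⟩

/-- The co-rank of a face of the `n`-cube. -/
def corank (x : Cube n) : ℕ := (x.pos ∪ x.neg).card

/-- The set of coatoms of `𝓛ₙ` lying above `a`. -/
def coatomsAbove (a : Cube n) : Set (Cube n) := {c | corank c = 1 ∧ a ≤ c}

/-- `A` is an MR-subalgebra of `𝓛ₙ`. -/
def IsMRSub (A : Set (Cube n)) : Prop :=
  ⊤ ∈ A ∧ (∀ x ∈ A, ∀ y ∈ A, x ⊔ y ∈ A) ∧
    (∀ x ∈ A, ∀ y ∈ A, y ≤ x → delta x y ∈ A) ∧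
    (∀ x ∈ A, ∀ y ∈ A, ∃ m ∈ A, IsGLB {x, delta (x ⊔ y) y} m)

/-- The coatoms of a subalgebra `A`: maximal elements of `A \ {⊤}`. -/
def coAt (A : Set (Cube n)) : Set (Cube n) :=
  {a | a ∈ A ∧ a ≠ ⊤ ∧ ∀ b ∈ A, b ≠ ⊤ → a ≤ b → b = a}

/-- The coatoms `a` of `A` with `|𝒞ₐ| = i`. -/
def typeSet (A : Set (Cube n)) (i : ℕ) : Set (Cube n) :=
  {a | a ∈ coAt A ∧ (coatomsAbove a).ncard = i}

/-- An order automorphism of `𝓛ₙ` is a cubic automorphism when it preserves `Δ`. -/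
def IsAut (φ : Cube n ≃o Cube n) : Prop :=
  ∀ x y : Cube n, y ≤ x → φ (delta x y) = delta (φ x) (φ y)

/-- The set of automorphisms of `𝓛ₙ`. -/
def AutSet (n : ℕ) : Set (Cube n ≃o Cube n) := {φ | IsAut φ}

/-- An automorphism of the subposet `A` preserving `Δ`. -/
def IsSubAut {A : Set (Cube n)} (ψ : A ≃o A) : Prop :=
  ∀ (x y : A), (y : Cube n) ≤ (x : Cube n) → ∀ h : delta ↑x ↑y ∈ A,
    (ψ ⟨delta ↑x ↑y, h⟩ : Cube n) = delta ↑(ψ x) ↑(ψ y)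

end Cube

namespace Cube
variable {n : ℕ}

open Finset

lemma le_def {x y : Cube n} : x ≤ y ↔ y.pos ⊆ x.pos ∧ y.neg ⊆ x.neg := Iff.rfl

@[simp] lemma top_pos : (⊤ : Cube n).pos = ∅ := rfl
@[simp] lemma top_neg : (⊤ : Cube n).neg = ∅ := rfl
@[simp] lemma sup_pos (x y : Cube n) : (x ⊔ y).pos = x.pos ∩ y.pos := rfl
@[simp] lemma sup_neg (x y : Cube n) : (x ⊔ y).neg = x.neg ∩ y.neg := rfl
@[simp] lemma delta_pos (x y : Cube n) : (delta x y).pos = x.pos ∪ (y.neg \ x.neg) := rfl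
@[simp] lemma delta_neg (x y : Cube n) : (delta x y).neg = x.neg ∪ (y.pos \ x.pos) := rfl

lemma eq_top_iff' (x : Cube n) : x = ⊤ ↔ x.pos = ∅ ∧ x.neg = ∅ := by
  constructor
  · rintro rfl; exact ⟨rfl, rfl⟩
  · rintro ⟨h1, h2⟩; exact Cube.ext h1 h2

noncomputable instance : DecidableEq (Cube n) := Classical.decEq _

noncomputable instance : Fintype (Cube n) :=
  Fintype.ofInjective (fun x => (x.pos, x.neg))
    (by rintro ⟨p, q, h⟩ ⟨p', q', h'⟩ he
        simp only [Prod.mk.injEq] at he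
        exact Cube.ext he.1 he.2)

/-- The antipodal map. -/
def alpha (x : Cube n) : Cube n := ⟨x.neg, x.pos, x.disj.symm⟩

@[simp] lemma alpha_pos (x : Cube n) : (alpha x).pos = x.neg := rfl
@[simp] lemma alpha_neg (x : Cube n) : (alpha x).neg = x.pos := rfl
@[simp] lemma alpha_alpha (x : Cube n) : alpha (alpha x) = x := rfl

lemma delta_top (y : Cube n) : delta ⊤ y = alpha y := by
  apply Cube.ext <;> simp

lemma alpha_le_alpha {x y : Cube n} (h : x ≤ y) : alpha x ≤ alpha y := ⟨h.2, h.1⟩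

@[simp] lemma alpha_top : alpha (⊤ : Cube n) = ⊤ := rfl

lemma alpha_ne_self {x : Cube n} (hx : x ≠ ⊤) : alpha x ≠ x := by
  intro h
  apply hx
  have h1 : x.neg = x.pos := congrArg Cube.pos h
  rw [eq_top_iff' x]
  have := x.disj
  rw [h1] at this
  simp only [disjoint_self] at this
  refine ⟨by simpa using this, ?_⟩
  rw [h1]; simpa using this

/-- support of a face -/
def supp (x : Cube n) : Finset (Fin n) := x.pos ∪ x.neg

lemma supp_nonempty {x : Cube n} (hx : x ≠ ⊤) : (supp x).Nonempty := by
  rw [Finset.nonempty_iff_ne_empty]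
  intro h
  apply hx
  rw [eq_top_iff' x]
  simp only [supp, Finset.union_eq_empty] at h
  exact h

@[simp] lemma supp_alpha (x : Cube n) : supp (alpha x) = supp x := by
  simp [supp, Finset.union_comm]

end Cube


namespace Cube
variable {n : ℕ} {A : Set (Cube n)}

open Finset

lemma alpha_mem (hA : IsMRSub A) {x : Cube n} (hx : x ∈ A) : alpha x ∈ A := by
  have := hA.2.2.1 ⊤ hA.1 x hx le_top
  rwa [delta_top] at this

lemma coAt_subset : coAt A ⊆ A := fun a ha => ha.1

lemma alpha_coAt (hA : IsMRSub A) {a : Cube n} (ha : a ∈ coAt A) : alpha a ∈ coAt A := by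
  obtain ⟨haA, hat, hamax⟩ := ha
  refine ⟨alpha_mem hA haA, ?_, ?_⟩
  · intro h; apply hat
    have := congrArg alpha h
    simpa using this
  · intro b hb hbt hle
    have h2 : a ≤ alpha b := by
      have := alpha_le_alpha hle; simpa using this
    have h3 : alpha b = a := hamax (alpha b) (alpha_mem hA hb) (by
      intro h; apply hbt; have := congrArg alpha h; simpa using this) h2
    have := congrArg alpha h3
    simpa using this

lemma coAt_sup_top (hA : IsMRSub A) {a b : Cube n} (ha : a ∈ coAt A) (hb : b ∈ coAt A)
    (hab : a ≠ b) : a ⊔ b = ⊤ := by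
  by_contra h
  have hc : a ⊔ b ∈ A := hA.2.1 a ha.1 b hb.1
  have h1 : a ⊔ b = a := ha.2.2 _ hc h le_sup_left
  have h2 : b ≤ a := h1 ▸ le_sup_right
  exact hab (hb.2.2 a ha.1 ha.2.1 h2)

lemma coAt_pos_disj (hA : IsMRSub A) {a b : Cube n} (ha : a ∈ coAt A) (hb : b ∈ coAt A)
    (hab : a ≠ b) : Disjoint a.pos b.pos := by
  have := coAt_sup_top hA ha hb hab
  have h1 : a.pos ∩ b.pos = ∅ := by
    have := congrArg Cube.pos this; simpa using this
  rwa [← Finset.disjoint_iff_inter_eq_empty] at h1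

lemma coAt_neg_disj (hA : IsMRSub A) {a b : Cube n} (ha : a ∈ coAt A) (hb : b ∈ coAt A)
    (hab : a ≠ b) : Disjoint a.neg b.neg := by
  have := coAt_sup_top hA ha hb hab
  have h1 : a.neg ∩ b.neg = ∅ := by
    have := congrArg Cube.neg this; simpa using this
  rwa [← Finset.disjoint_iff_inter_eq_empty] at h1

/-- Master disjointness: distinct, non-antipodal coatoms have disjoint supports. -/
lemma coAt_supp_disj (hA : IsMRSub A) {a b : Cube n} (ha : a ∈ coAt A) (hb : b ∈ coAt A)
    (hab : a ≠ b) (hab' : b ≠ alpha a) : Disjoint (supp a) (supp b) := by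
  have hba : a ≠ alpha b := by
    intro h; apply hab'; rw [h]; simp
  have d1 := coAt_pos_disj hA ha hb hab
  have d2 := coAt_neg_disj hA ha hb hab
  have d3 : Disjoint a.pos b.neg := by
    simpa using coAt_pos_disj hA ha (alpha_coAt hA hb) hba
  have d4 : Disjoint a.neg b.pos := by
    simpa using coAt_neg_disj hA ha (alpha_coAt hA hb) hba
  simp only [supp, Finset.disjoint_union_left, Finset.disjoint_union_right]
  exact ⟨⟨d1, d4⟩, ⟨d3, d2⟩⟩

/-- Distinct coatoms above a common element have disjoint supports. -/
lemma coAt_supp_disj_of_le (hA : IsMRSub A) {a b z : Cube n} (ha : a ∈ coAt A)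
    (hb : b ∈ coAt A) (hab : a ≠ b) (hza : z ≤ a) (hzb : z ≤ b) :
    Disjoint (supp a) (supp b) := by
  refine coAt_supp_disj hA ha hb hab ?_
  intro h
  apply ha.2.1
  rw [eq_top_iff' a]
  have h1 : b.pos = a.neg := by rw [h]; rfl
  have h2 : b.neg = a.pos := by rw [h]; rfl
  have hp : a.pos ⊆ z.pos := hza.1
  have hn : a.neg ⊆ z.neg := hza.2
  have hp' : a.neg ⊆ z.pos := by rw [← h1]; exact hzb.1
  have hn' : a.pos ⊆ z.neg := by rw [← h2]; exact hzb.2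
  constructor
  · rw [← Finset.subset_empty]
    intro j hj
    exact (Finset.disjoint_left.mp z.disj (hp hj) (hn' hj)).elim
  · rw [← Finset.subset_empty]
    intro j hj
    exact (Finset.disjoint_left.mp z.disj (hp' hj) (hn hj)).elim

lemma exists_coAt_above (hA : IsMRSub A) {x : Cube n} (hx : x ∈ A) (hxt : x ≠ ⊤) :
    ∃ a ∈ coAt A, x ≤ a := by
  classical
  set M : Set (Cube n) := {y | y ∈ A ∧ x ≤ y ∧ y ≠ ⊤} with hM
  have hfin : M.Finite := Set.toFinite _
  have hne : M.Nonempty := ⟨x, hx, le_refl x, hxt⟩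
  obtain ⟨a, haM, hmax⟩ := Set.Finite.exists_maximal hfin hne
  refine ⟨a, ⟨haM.1, haM.2.2, ?_⟩, haM.2.1⟩
  intro b hb hbt hab
  exact le_antisymm (hmax ⟨hb, le_trans haM.2.1 hab, hbt⟩ hab) hab

/-- Removing the coordinates of `a` from `x` stays in `A`. -/
lemma sdiff_mem (hA : IsMRSub A) {x a : Cube n} (hx : x ∈ A) (haA : a ∈ A) (hxa : x ≤ a) :
    (⟨x.pos \ a.pos, x.neg \ a.neg,
      x.disj.mono Finset.sdiff_subset Finset.sdiff_subset⟩ : Cube n) ∈ A := by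
  have hd : delta a x ∈ A := hA.2.2.1 a haA x hx hxa
  have hz : alpha (delta a x) ∈ A := alpha_mem hA hd
  have hj := hA.2.1 x hx _ hz
  have he : x ⊔ alpha (delta a x) =
      (⟨x.pos \ a.pos, x.neg \ a.neg,
        x.disj.mono Finset.sdiff_subset Finset.sdiff_subset⟩ : Cube n) := by
    have hp : a.pos ⊆ x.pos := hxa.1
    have hn : a.neg ⊆ x.neg := hxa.2
    apply Cube.ext
    · show x.pos ∩ (a.neg ∪ (x.pos \ a.pos)) = x.pos \ a.pos
      ext j
      simp only [Finset.mem_inter, Finset.mem_union, Finset.mem_sdiff]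
      constructor
      · rintro ⟨hjx, hj2 | hj2⟩
        · exact (Finset.disjoint_left.mp x.disj hjx (hn hj2)).elim
        · exact hj2
      · rintro ⟨hjx, hj2⟩; exact ⟨hjx, Or.inr ⟨hjx, hj2⟩⟩
    · show x.neg ∩ (a.pos ∪ (x.neg \ a.neg)) = x.neg \ a.neg
      ext j
      simp only [Finset.mem_inter, Finset.mem_union, Finset.mem_sdiff]
      constructor
      · rintro ⟨hjx, hj2 | hj2⟩
        · exact (Finset.disjoint_left.mp x.disj (hp hj2) hjx).elim
        · exact hj2
      · rintro ⟨hjx, hj2⟩; exact ⟨hjx, Or.inr ⟨hjx, hj2⟩⟩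
  rwa [he] at hj

end Cube


namespace Cube
variable {n : ℕ} {A : Set (Cube n)}

open Finset

lemma supp_subset_of_le {x a : Cube n} (h : x ≤ a) : supp a ⊆ supp x :=
  Finset.union_subset (h.1.trans Finset.subset_union_left)
    (h.2.trans (Finset.subset_union_right))

lemma cover (hA : IsMRSub A) : ∀ x ∈ A,
    (∀ j ∈ x.pos, ∃ a, a ∈ coAt A ∧ x ≤ a ∧ j ∈ a.pos) ∧
    (∀ j ∈ x.neg, ∃ a, a ∈ coAt A ∧ x ≤ a ∧ j ∈ a.neg) := by
  suffices H : ∀ k, ∀ x ∈ A, (supp x).card = k →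
      (∀ j ∈ x.pos, ∃ a, a ∈ coAt A ∧ x ≤ a ∧ j ∈ a.pos) ∧
      (∀ j ∈ x.neg, ∃ a, a ∈ coAt A ∧ x ≤ a ∧ j ∈ a.neg) by
    exact fun x hx => H _ x hx rfl
  intro k
  induction k using Nat.strong_induction_on with
  | _ k IH =>
    intro x hx hk
    by_cases hxt : x = ⊤
    · subst hxt; constructor <;> intro j hj <;> simp at hj
    obtain ⟨a, ha, hxa⟩ := exists_coAt_above hA hx hxt
    set x' : Cube n := ⟨x.pos \ a.pos, x.neg \ a.neg,
      x.disj.mono Finset.sdiff_subset Finset.sdiff_subset⟩ with hx'def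
    have hx' : x' ∈ A := sdiff_mem hA hx ha.1 hxa
    have hsupp : supp x' = supp x \ supp a := by
      have hp : a.pos ⊆ x.pos := hxa.1
      have hn : a.neg ⊆ x.neg := hxa.2
      ext j
      simp only [supp, hx'def, Finset.mem_union, Finset.mem_sdiff]
      constructor
      · rintro (⟨h1, h2⟩ | ⟨h1, h2⟩)
        · refine ⟨Or.inl h1, fun hc => ?_⟩
          rcases hc with hc | hc
          · exact h2 hc
          · exact (Finset.disjoint_left.mp x.disj h1 (hn hc)).elim
        · refine ⟨Or.inr h1, fun hc => ?_⟩
          rcases hc with hc | hc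
          · exact (Finset.disjoint_left.mp x.disj (hp hc) h1).elim
          · exact h2 hc
      · rintro ⟨h1 | h1, h2⟩
        · exact Or.inl ⟨h1, fun hc => h2 (Or.inl hc)⟩
        · exact Or.inr ⟨h1, fun hc => h2 (Or.inr hc)⟩
    have hlt : (supp x').card < k := by
      rw [hsupp, ← hk]
      exact Finset.card_lt_card
        (Finset.sdiff_ssubset (supp_subset_of_le hxa) (supp_nonempty ha.2.1))
    have hxx' : x ≤ x' := ⟨Finset.sdiff_subset, Finset.sdiff_subset⟩
    have IH' := IH _ hlt x' hx' rfl
    constructor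
    · intro j hj
      by_cases hja : j ∈ a.pos
      · exact ⟨a, ha, hxa, hja⟩
      · obtain ⟨b, hb, hxb, hjb⟩ := IH'.1 j (by
          simp only [hx'def, Finset.mem_sdiff]; exact ⟨hj, hja⟩)
        exact ⟨b, hb, le_trans hxx' hxb, hjb⟩
    · intro j hj
      by_cases hja : j ∈ a.neg
      · exact ⟨a, ha, hxa, hja⟩
      · obtain ⟨b, hb, hxb, hjb⟩ := IH'.2 j (by
          simp only [hx'def, Finset.mem_sdiff]; exact ⟨hj, hja⟩)
        exact ⟨b, hb, le_trans hxx' hxb, hjb⟩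

lemma isGLB_coatoms_above (hA : IsMRSub A) {x : Cube n} (hx : x ∈ A) :
    IsGLB {a | a ∈ coAt A ∧ x ≤ a} x := by
  constructor
  · intro a ha; exact ha.2
  · intro v hv
    have hc := cover hA x hx
    constructor
    · intro j hj
      obtain ⟨a, ha, hxa, hja⟩ := hc.1 j hj
      exact (hv ⟨ha, hxa⟩).1 hja
    · intro j hj
      obtain ⟨a, ha, hxa, hja⟩ := hc.2 j hj
      exact (hv ⟨ha, hxa⟩).2 hja

lemma isGLB_pair {u a : Cube n} (w : Cube n) (hwp : w.pos = u.pos ∪ a.pos)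
    (hwn : w.neg = u.neg ∪ a.neg) : IsGLB {u, a} w := by
  constructor
  · rintro z (rfl | rfl)
    · exact ⟨hwp ▸ Finset.subset_union_left, hwn ▸ Finset.subset_union_left⟩
    · exact ⟨hwp ▸ Finset.subset_union_right, hwn ▸ Finset.subset_union_right⟩
  · intro v hv
    have h1 : v ≤ u := hv (Set.mem_insert _ _)
    have h2 : v ≤ a := hv (Set.mem_insert_of_mem _ rfl)
    exact ⟨hwp ▸ Finset.union_subset h1.1 h2.1, hwn ▸ Finset.union_subset h1.2 h2.2⟩

lemma isGLB_biUnion {t : Finset (Cube n)} (w : Cube n)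
    (hwp : w.pos = t.biUnion Cube.pos) (hwn : w.neg = t.biUnion Cube.neg) :
    IsGLB (↑t : Set (Cube n)) w := by
  constructor
  · intro z hz
    refine ⟨hwp ▸ ?_, hwn ▸ ?_⟩
    · exact Finset.subset_biUnion_of_mem Cube.pos (by exact_mod_cast hz)
    · exact Finset.subset_biUnion_of_mem Cube.neg (by exact_mod_cast hz)
  · intro v hv
    refine ⟨hwp ▸ ?_, hwn ▸ ?_⟩
    · exact Finset.biUnion_subset.mpr (fun z hz => (hv (by exact_mod_cast hz)).1)
    · exact Finset.biUnion_subset.mpr (fun z hz => (hv (by exact_mod_cast hz)).2)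

/-- `A` is closed under compatible meets. -/
lemma biUnion_mem (hA : IsMRSub A) (t : Finset (Cube n)) (htA : ↑t ⊆ A)
    (hdisj : ∀ a ∈ t, ∀ b ∈ t, a ≠ b → Disjoint (supp a) (supp b)) :
    ∃ u ∈ A, u.pos = t.biUnion Cube.pos ∧ u.neg = t.biUnion Cube.neg := by
  classical
  induction t using Finset.induction_on with
  | empty => exact ⟨⊤, hA.1, by simp, by simp⟩
  | @insert a s has IH =>
    have hsA : ↑s ⊆ A := fun z hz => htA (by
      simp only [Finset.coe_insert, Set.mem_insert_iff]; right; exact_mod_cast hz)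
    have haA : a ∈ A := htA (by simp)
    obtain ⟨u, huA, hup, hun⟩ := IH hsA (fun b hb c hc hbc =>
      hdisj b (Finset.mem_insert_of_mem hb) c (Finset.mem_insert_of_mem hc) hbc)
    have hda : ∀ b ∈ s, Disjoint (supp a) (supp b) := fun b hb =>
      hdisj a (Finset.mem_insert_self a s) b (Finset.mem_insert_of_mem hb)
        (fun h => has (h ▸ hb))
    have hupd : Disjoint u.pos (supp a) := by
      rw [hup]
      rw [Finset.disjoint_left]
      intro j hj hja
      obtain ⟨b, hb, hjb⟩ := Finset.mem_biUnion.mp hj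
      exact Finset.disjoint_left.mp (hda b hb) hja
        (Finset.mem_union_left _ hjb)
    have hund : Disjoint u.neg (supp a) := by
      rw [hun]
      rw [Finset.disjoint_left]
      intro j hj hja
      obtain ⟨b, hb, hjb⟩ := Finset.mem_biUnion.mp hj
      exact Finset.disjoint_left.mp (hda b hb) hja
        (Finset.mem_union_right _ hjb)
    have hsup : u ⊔ alpha a = ⊤ := by
      apply Cube.ext
      · show u.pos ∩ a.neg = ∅
        rw [← Finset.disjoint_iff_inter_eq_empty]
        refine hupd.mono_right ?_
        show a.neg ⊆ supp a; exact Finset.subset_union_right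
      · show u.neg ∩ a.pos = ∅
        rw [← Finset.disjoint_iff_inter_eq_empty]
        refine hund.mono_right ?_
        show a.pos ⊆ supp a; exact Finset.subset_union_left
    obtain ⟨m, hmA, hm⟩ := hA.2.2.2 u huA (alpha a) (alpha_mem hA haA)
    rw [hsup, delta_top, alpha_alpha] at hm
    have hwd : Disjoint (u.pos ∪ a.pos) (u.neg ∪ a.neg) := by
      simp only [Finset.disjoint_union_left, Finset.disjoint_union_right]
      refine ⟨⟨u.disj, (hund.mono_right ?_).symm⟩, ⟨hupd.mono_right ?_, a.disj⟩⟩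
      · show a.pos ⊆ supp a; exact Finset.subset_union_left
      · show a.neg ⊆ supp a; exact Finset.subset_union_right
    set w : Cube n := ⟨u.pos ∪ a.pos, u.neg ∪ a.neg, hwd⟩ with hwdef
    have hglb : IsGLB {u, a} w := isGLB_pair w rfl rfl
    have hmw : m = w := hm.unique hglb
    refine ⟨w, hmw ▸ hmA, ?_, ?_⟩
    · show u.pos ∪ a.pos = _
      rw [Finset.biUnion_insert, hup, Finset.union_comm]
    · show u.neg ∪ a.neg = _
      rw [Finset.biUnion_insert, hun, Finset.union_comm]

end Cube


namespace Cube
variable {n : ℕ} {A B : Set (Cube n)}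

open Finset

lemma image_subset_of_coAt (φ : Cube n ≃o Cube n) (hA : IsMRSub A) (hB : IsMRSub B)
    (hco : φ '' coAt A ⊆ coAt B) : φ '' A ⊆ B := by
  rintro _ ⟨x, hx, rfl⟩
  set T : Set (Cube n) := {a | a ∈ coAt A ∧ x ≤ a} with hTdef
  have hT : IsGLB T x := isGLB_coatoms_above hA hx
  have hTi : IsGLB (φ '' T) (φ x) := φ.isGLB_image'.mpr hT
  have hfin : (φ '' T).Finite := Set.toFinite _
  have hct : (↑hfin.toFinset : Set (Cube n)) = φ '' T := hfin.coe_toFinset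
  have hmem : ∀ b ∈ hfin.toFinset, b ∈ coAt B ∧ φ x ≤ b := by
    intro b hb
    rw [Set.Finite.mem_toFinset] at hb
    obtain ⟨a, ⟨haco, hxa⟩, rfl⟩ := hb
    exact ⟨hco ⟨a, haco, rfl⟩, φ.monotone hxa⟩
  obtain ⟨u, huB, hup, hun⟩ := biUnion_mem hB hfin.toFinset
    (fun b hb => coAt_subset ((hmem b (by exact_mod_cast hb)).1))
    (fun a ha b hb hab => coAt_supp_disj_of_le hB (hmem a ha).1 (hmem b hb).1 hab
      (hmem a ha).2 (hmem b hb).2)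
  have hglb : IsGLB (↑hfin.toFinset : Set (Cube n)) u := isGLB_biUnion u hup hun
  rw [hct] at hglb
  have : u = φ x := hglb.unique hTi
  rwa [← this]

lemma image_eq_of_coAt (φ : Cube n ≃o Cube n) (hA : IsMRSub A) (hB : IsMRSub B)
    (hco : φ '' coAt A = coAt B) : φ '' A = B := by
  apply Set.Subset.antisymm
  · exact image_subset_of_coAt φ hA hB hco.subset
  · have hco' : φ.symm '' coAt B ⊆ coAt A := by
      rw [← hco, ← Set.image_comp]
      intro a ha
      obtain ⟨b, hb, rfl⟩ := ha
      simpa using hb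
    have := image_subset_of_coAt φ.symm hB hA hco'
    intro b hb
    exact ⟨φ.symm b, this ⟨b, hb, rfl⟩, by simp⟩

end Cube


namespace Cube
variable {n : ℕ}

open Finset

/-- sign flip on a set `s` of coordinates -/
def flipFun (s : Finset (Fin n)) (x : Cube n) : Cube n :=
  ⟨(x.pos \ s) ∪ (x.neg ∩ s), (x.neg \ s) ∪ (x.pos ∩ s), by
    rw [Finset.disjoint_left]
    intro j hj hj'
    simp only [Finset.mem_union, Finset.mem_sdiff, Finset.mem_inter] at hj hj'
    have hd : j ∈ x.pos → j ∈ x.neg → False := fun h1 h2 =>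
      Finset.disjoint_left.mp x.disj h1 h2
    tauto⟩

@[simp] lemma flipFun_pos (s : Finset (Fin n)) (x : Cube n) :
    (flipFun s x).pos = (x.pos \ s) ∪ (x.neg ∩ s) := rfl
@[simp] lemma flipFun_neg (s : Finset (Fin n)) (x : Cube n) :
    (flipFun s x).neg = (x.neg \ s) ∪ (x.pos ∩ s) := rfl

lemma flipFun_invol (s : Finset (Fin n)) (x : Cube n) : flipFun s (flipFun s x) = x := by
  apply Cube.ext <;>
  · ext j
    simp only [flipFun_pos, flipFun_neg, Finset.mem_union, Finset.mem_sdiff,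
      Finset.mem_inter]
    by_cases hj : j ∈ s <;> tauto

lemma flipFun_mono (s : Finset (Fin n)) {x y : Cube n} (h : x ≤ y) :
    flipFun s x ≤ flipFun s y := by
  constructor <;>
  · intro j hj
    simp only [flipFun_pos, flipFun_neg, Finset.mem_union, Finset.mem_sdiff,
      Finset.mem_inter] at hj ⊢
    have h1 := @h.1 j
    have h2 := @h.2 j
    tauto

/-- sign flip as an order isomorphism -/
def flipIso (s : Finset (Fin n)) : Cube n ≃o Cube n where
  toFun := flipFun s
  invFun := flipFun s
  left_inv := flipFun_invol s
  right_inv := flipFun_invol s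
  map_rel_iff' := by
    intro x y
    constructor
    · intro h
      have h2 := flipFun_mono s (show flipFun s x ≤ flipFun s y from h)
      rwa [flipFun_invol, flipFun_invol] at h2
    · exact flipFun_mono s

@[simp] lemma flipIso_apply (s : Finset (Fin n)) (x : Cube n) :
    flipIso s x = flipFun s x := rfl

lemma flipIso_isAut (s : Finset (Fin n)) : IsAut (flipIso s) := by
  intro x y hyx
  apply Cube.ext <;>
  · ext j
    simp only [flipIso_apply, flipFun_pos, flipFun_neg, delta_pos, delta_neg,
      Finset.mem_union, Finset.mem_sdiff, Finset.mem_inter]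
    by_cases hj : j ∈ s <;> tauto

def relabelFun (p : Fin n ≃ Fin n) (x : Cube n) : Cube n :=
  ⟨x.pos.map p.toEmbedding, x.neg.map p.toEmbedding,
    (Finset.disjoint_map p.toEmbedding).mpr x.disj⟩

@[simp] lemma relabelFun_pos (p : Fin n ≃ Fin n) (x : Cube n) :
    (relabelFun p x).pos = x.pos.map p.toEmbedding := rfl
@[simp] lemma relabelFun_neg (p : Fin n ≃ Fin n) (x : Cube n) :
    (relabelFun p x).neg = x.neg.map p.toEmbedding := rfl

lemma relabelFun_inv (p : Fin n ≃ Fin n) (x : Cube n) :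
    relabelFun p.symm (relabelFun p x) = x := by
  apply Cube.ext <;>
  · ext j
    simp [Finset.mem_map_equiv]

lemma relabelFun_mono (p : Fin n ≃ Fin n) {x y : Cube n} (h : x ≤ y) :
    relabelFun p x ≤ relabelFun p y := by
  constructor <;> intro j hj <;>
    simp only [relabelFun_pos, relabelFun_neg, Finset.mem_map_equiv] at hj ⊢
  · exact h.1 hj
  · exact h.2 hj

/-- relabelling of coordinates as an order isomorphism -/
def relabelIso (p : Fin n ≃ Fin n) : Cube n ≃o Cube n where
  toFun := relabelFun p
  invFun := relabelFun p.symm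
  left_inv x := relabelFun_inv p x
  right_inv x := by
    have := relabelFun_inv p.symm x
    rwa [Equiv.symm_symm] at this
  map_rel_iff' := by
    intro x y
    constructor
    · intro h
      have h2 := relabelFun_mono p.symm (show relabelFun p x ≤ relabelFun p y from h)
      rwa [relabelFun_inv, relabelFun_inv] at h2
    · exact relabelFun_mono p

@[simp] lemma relabelIso_pos (p : Fin n ≃ Fin n) (x : Cube n) :
    (relabelIso p x).pos = x.pos.map p.toEmbedding := rfl
@[simp] lemma relabelIso_neg (p : Fin n ≃ Fin n) (x : Cube n) :
    (relabelIso p x).neg = x.neg.map p.toEmbedding := rfl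

lemma relabelIso_isAut (p : Fin n ≃ Fin n) : IsAut (relabelIso p) := by
  intro x y hyx
  apply Cube.ext <;>
  · ext j
    simp [Finset.mem_map_equiv, Finset.mem_union, Finset.mem_sdiff]

lemma isAut_trans {φ ψ : Cube n ≃o Cube n} (hφ : IsAut φ) (hψ : IsAut ψ) :
    IsAut (φ.trans ψ) := by
  intro x y hyx
  have h1 := hφ x y hyx
  have h2 := hψ (φ x) (φ y) (φ.monotone hyx)
  simp only [OrderIso.trans_apply]
  rw [h1, h2]

lemma isAut_alpha_comm {φ : Cube n ≃o Cube n} (hφ : IsAut φ) (x : Cube n) :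
    φ (alpha x) = alpha (φ x) := by
  rw [← delta_top, ← delta_top]
  have := hφ ⊤ x le_top
  rwa [map_top] at this

end Cube


namespace Cube
variable {n : ℕ} {A : Set (Cube n)}

open Finset

lemma corank_eq (c : Cube n) : corank c = (supp c).card := rfl

lemma ncard_coatomsAbove (a : Cube n) : (coatomsAbove a).ncard = (supp a).card := by
  classical
  set f : Fin n → Cube n := fun j =>
    if j ∈ a.pos then ⟨{j}, ∅, by simp⟩ else ⟨∅, {j}, by simp⟩ with hf
  have hbij : Set.BijOn f ↑(supp a) (coatomsAbove a) := by
    refine ⟨?_, ?_, ?_⟩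
    · intro j hj
      simp only [Finset.coe_union, Set.mem_union, Finset.mem_coe, supp] at hj
      by_cases hjp : j ∈ a.pos
      · refine ⟨?_, ?_, ?_⟩
        · simp [corank, hf, hjp]
        · show Cube.pos _ ⊆ a.pos
          simp only [hf, if_pos hjp]
          simpa using hjp
        · show Cube.neg _ ⊆ a.neg
          simp [hf, if_pos hjp]
      · have hjn : j ∈ a.neg := by
          rcases hj with hj | hj
          · exact absurd (by simpa [supp] using hj) hjp
          · simpa [supp] using hj
        refine ⟨?_, ?_, ?_⟩
        · simp [corank, hf, hjp]
        · show Cube.pos _ ⊆ a.pos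
          simp [hf, if_neg hjp]
        · show Cube.neg _ ⊆ a.neg
          simp only [hf, if_neg hjp]
          simpa using hjn
    · intro j hj j' hj' he
      by_cases h1 : j ∈ a.pos <;> by_cases h2 : j' ∈ a.pos
      · have := congrArg Cube.pos he
        simp only [hf, if_pos h1, if_pos h2] at this
        simpa using this
      · have := congrArg Cube.pos he
        simp only [hf, if_pos h1, if_neg h2] at this
        simp at this
      · have := congrArg Cube.pos he
        simp only [hf, if_neg h1, if_pos h2] at this
        exact absurd this.symm (Finset.singleton_ne_empty _)
      · have := congrArg Cube.neg he
        simp only [hf, if_neg h1, if_neg h2] at this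
        simpa using this
    · intro c hc
      obtain ⟨hc1, hc2⟩ := hc
      rw [corank_eq] at hc1
      obtain ⟨j, hj⟩ := Finset.card_eq_one.mp hc1
      have hjs : j ∈ supp c := by rw [hj]; exact Finset.mem_singleton_self j
      by_cases hjp : j ∈ c.pos
      · have hja : j ∈ a.pos := hc2.1 hjp
        refine ⟨j, ?_, ?_⟩
        · simp only [Finset.coe_union, Set.mem_union, Finset.mem_coe, supp]
          left; exact_mod_cast hja
        · simp only [hf, if_pos hja]
          apply Cube.ext
          · show {j} = c.pos
            apply Finset.Subset.antisymm
            · simpa using hjp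
            · intro i hi
              have : i ∈ supp c := Finset.mem_union_left _ hi
              rwa [hj] at this
          · show (∅ : Finset (Fin n)) = c.neg
            symm
            rw [Finset.eq_empty_iff_forall_notMem]
            intro i hi
            have : i ∈ supp c := Finset.mem_union_right _ hi
            rw [hj, Finset.mem_singleton] at this
            subst this
            exact Finset.disjoint_left.mp c.disj hjp hi
      · have hjn : j ∈ c.neg := by
          rcases Finset.mem_union.mp hjs with h | h
          · exact absurd h hjp
          · exact h
        have hja : j ∈ a.neg := hc2.2 hjn
        have hjap : j ∉ a.pos := Finset.disjoint_left.mp a.disj.symm hja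
        refine ⟨j, ?_, ?_⟩
        · simp only [Finset.coe_union, Set.mem_union, Finset.mem_coe, supp]
          right; exact_mod_cast hja
        · simp only [hf, if_neg hjap]
          apply Cube.ext
          · show (∅ : Finset (Fin n)) = c.pos
            symm
            rw [Finset.eq_empty_iff_forall_notMem]
            intro i hi
            have : i ∈ supp c := Finset.mem_union_left _ hi
            rw [hj, Finset.mem_singleton] at this
            subst this
            exact hjp hi
          · show {j} = c.neg
            apply Finset.Subset.antisymm
            · simpa using hjn
            · intro i hi
              have : i ∈ supp c := Finset.mem_union_right _ hi
              rwa [hj] at this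
  calc (coatomsAbove a).ncard = (f '' ↑(supp a)).ncard := by rw [hbij.image_eq]
    _ = (↑(supp a) : Set (Fin n)).ncard := Set.ncard_image_of_injOn hbij.injOn
    _ = (supp a).card := Set.ncard_coe_finset _

lemma typeSet_ncard (A : Set (Cube n)) (i : ℕ) :
    (typeSet A i).ncard =
      ((Set.toFinite (coAt A)).toFinset.filter (fun a => (supp a).card = i)).card := by
  classical
  have : typeSet A i =
      ↑((Set.toFinite (coAt A)).toFinset.filter (fun a => (supp a).card = i)) := by
    ext a
    simp only [typeSet, Set.mem_setOf_eq, Finset.coe_filter, Set.Finite.mem_toFinset,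
      Set.mem_setOf_eq, ncard_coatomsAbove]
  rw [this, Set.ncard_coe_finset]

lemma coAt_of_supp_eq (hA : IsMRSub A) {a b : Cube n} (ha : a ∈ coAt A) (hb : b ∈ coAt A)
    (h : supp a = supp b) : b = a ∨ b = alpha a := by
  by_contra hc
  push_neg at hc
  have hd := coAt_supp_disj hA ha hb (fun he => hc.1 he.symm) hc.2
  rw [h] at hd
  exact (supp_nonempty hb.2.1).ne_empty (by simpa using disjoint_self.mp hd)

lemma card_filter_supp (hA : IsMRSub A) (i : ℕ) :
    ((Set.toFinite (coAt A)).toFinset.filter (fun a => (supp a).card = i)).card =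
      2 * ((((Set.toFinite (coAt A)).toFinset.image supp)).filter
        (fun S => S.card = i)).card := by
  classical
  set KA := (Set.toFinite (coAt A)).toFinset with hKA
  set s := KA.filter (fun a => (supp a).card = i) with hs
  set t := (KA.image supp).filter (fun S => S.card = i) with ht
  have hmaps : ∀ a ∈ s, supp a ∈ t := by
    intro a ha
    rw [hs, Finset.mem_filter] at ha
    rw [ht, Finset.mem_filter]
    exact ⟨Finset.mem_image_of_mem supp ha.1, ha.2⟩
  rw [Finset.card_eq_sum_card_fiberwise hmaps]
  have hfib : ∀ S ∈ t, (s.filter (fun a => supp a = S)).card = 2 := by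
    intro S hS
    rw [ht, Finset.mem_filter] at hS
    obtain ⟨hS1, hS2⟩ := hS
    obtain ⟨a, haK, haS⟩ := Finset.mem_image.mp hS1
    have haco : a ∈ coAt A := by rwa [Set.Finite.mem_toFinset] at haK
    have hane : a ≠ alpha a := (alpha_ne_self haco.2.1).symm
    have : s.filter (fun b => supp b = S) = {a, alpha a} := by
      ext b
      rw [Finset.mem_filter, Finset.mem_insert, Finset.mem_singleton]
      constructor
      · rintro ⟨hbs, hbS⟩
        rw [hs, Finset.mem_filter, Set.Finite.mem_toFinset] at hbs
        have hsupp : supp a = supp b := by rw [haS, hbS]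
        exact coAt_of_supp_eq hA haco hbs.1 hsupp
      · rintro (rfl | rfl)
        · refine ⟨?_, haS⟩
          rw [hs, Finset.mem_filter, Set.Finite.mem_toFinset]
          exact ⟨haco, by rw [haS]; exact hS2⟩
        · refine ⟨?_, by rw [supp_alpha, haS]⟩
          rw [hs, Finset.mem_filter, Set.Finite.mem_toFinset]
          exact ⟨alpha_coAt hA haco, by rw [supp_alpha, haS]; exact hS2⟩
    rw [this, Finset.card_pair hane]
  rw [Finset.sum_congr rfl hfib, Finset.sum_const, smul_eq_mul, Nat.mul_comm]

/-- generic matching lemma -/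
lemma exists_card_matching {α : Type*} [DecidableEq α] (f g : α → ℕ) :
    ∀ (k : ℕ) (X Y : Finset α), X.card = k →
    (∀ i, (X.filter (fun a => f a = i)).card = (Y.filter (fun a => g a = i)).card) →
    ∃ m : α → α, Set.BijOn m ↑X ↑Y ∧ ∀ a ∈ X, g (m a) = f a := by
  intro k
  induction k with
  | zero =>
    intro X Y hX h
    have hXe : X = ∅ := Finset.card_eq_zero.mp hX
    have hYe : Y = ∅ := by
      rw [Finset.eq_empty_iff_forall_notMem]
      intro y hy
      have := h (g y)
      rw [hXe] at this
      simp only [Finset.filter_empty, Finset.card_empty] at this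
      have hmem : y ∈ Y.filter (fun a => g a = g y) := Finset.mem_filter.mpr ⟨hy, rfl⟩
      rw [Finset.card_eq_zero.mp this.symm] at hmem
      simp at hmem
    subst hXe; subst hYe
    exact ⟨id, by simp, by simp⟩
  | succ k IH =>
    intro X Y hX h
    have hXne : X.Nonempty := Finset.card_pos.mp (by omega)
    obtain ⟨x, hx⟩ := hXne
    have h1 : (Y.filter (fun a => g a = f x)).card ≠ 0 := by
      rw [← h (f x)]
      intro hc
      have : x ∈ X.filter (fun a => f a = f x) := Finset.mem_filter.mpr ⟨hx, rfl⟩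
      rw [Finset.card_eq_zero.mp hc] at this
      simp at this
    obtain ⟨y, hy⟩ := Finset.card_pos.mp (Nat.pos_of_ne_zero h1)
    rw [Finset.mem_filter] at hy
    obtain ⟨hyY, hgy⟩ := hy
    have hfe : ∀ i, ((X.erase x).filter (fun a => f a = i)).card =
        ((Y.erase y).filter (fun a => g a = i)).card := by
      intro i
      rw [Finset.filter_erase, Finset.filter_erase]
      by_cases hi : f x = i
      · rw [Finset.card_erase_of_mem (Finset.mem_filter.mpr ⟨hx, hi⟩),
          Finset.card_erase_of_mem (Finset.mem_filter.mpr ⟨hyY, by rw [hgy, hi]⟩), h i]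
      · rw [Finset.erase_eq_of_notMem, Finset.erase_eq_of_notMem, h i]
        · intro hc; exact hi (by rw [← hgy]; exact (Finset.mem_filter.mp hc).2)
        · intro hc; exact hi (Finset.mem_filter.mp hc).2
    obtain ⟨m', hm'bij, hm'p⟩ := IH (X.erase x) (Y.erase y)
      (by rw [Finset.card_erase_of_mem hx, hX]; rfl) hfe
    classical
    refine ⟨Function.update m' x y, ?_, ?_⟩
    · have heq : Set.EqOn (Function.update m' x y) m' ↑(X.erase x) := by
        intro a ha
        have : a ≠ x := by
          simp only [Finset.coe_erase, Set.mem_diff, Set.mem_singleton_iff] at ha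
          exact ha.2
        simp [Function.update_of_ne this]
      have hb1 : Set.BijOn (Function.update m' x y) ↑(X.erase x) ↑(Y.erase y) :=
        hm'bij.congr heq.symm
      have hb2 := hb1.insert (a := x) (by
        rw [Function.update_self]
        simp)
      have hX' : (insert x ↑(X.erase x) : Set α) = ↑X := by
        rw [← Finset.coe_insert, Finset.insert_erase hx]
      have hY' : (insert (Function.update m' x y x) ↑(Y.erase y) : Set α) = ↑Y := by
        rw [Function.update_self, ← Finset.coe_insert, Finset.insert_erase hyY]
      rwa [hX', hY'] at hb2
    · intro a haX
      by_cases hax : a = x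
      · subst hax
        rw [Function.update_self, hgy]
      · rw [Function.update_of_ne hax]
        exact hm'p a (Finset.mem_erase.mpr ⟨hax, haX⟩)

end Cube


namespace Cube
variable {n : ℕ}

open Finset

section Glue

variable (BA BB : Finset (Finset (Fin n))) (m : Finset (Fin n) → Finset (Fin n))

/-- the block containing `j` -/
noncomputable def blkOf (j : Fin n) : Finset (Fin n) :=
  if h : ∃ S ∈ BA, j ∈ S then h.choose else ∅

lemma blkOf_mem {j : Fin n} (h : ∃ S ∈ BA, j ∈ S) :
    blkOf BA j ∈ BA ∧ j ∈ blkOf BA j := by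
  rw [blkOf, dif_pos h]
  exact ⟨h.choose_spec.1, h.choose_spec.2⟩

lemma blkOf_eq (hdA : ∀ S ∈ BA, ∀ S' ∈ BA, S ≠ S' → Disjoint S S')
    {j : Fin n} {S : Finset (Fin n)} (hS : S ∈ BA) (hj : j ∈ S) : blkOf BA j = S := by
  have h : ∃ S ∈ BA, j ∈ S := ⟨S, hS, hj⟩
  obtain ⟨h1, h2⟩ := blkOf_mem BA h
  by_contra hne
  exact Finset.disjoint_left.mp (hdA _ h1 _ hS hne) h2 hj

/-- the glued bijection -/
noncomputable def glue (hcard : ∀ S ∈ BA, S.card = (m S).card)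
    (hC : ((BA.biUnion id)ᶜ : Finset (Fin n)).card = ((BB.biUnion id)ᶜ : Finset (Fin n)).card)
    (j : Fin n) : Fin n :=
  if h : ∃ S ∈ BA, j ∈ S then
    ↑(Finset.equivOfCardEq (hcard _ (blkOf_mem BA h).1) ⟨j, (blkOf_mem BA h).2⟩)
  else
    ↑(Finset.equivOfCardEq hC ⟨j, by
        simp only [Finset.mem_compl, Finset.mem_biUnion, id]
        push_neg
        intro S hS
        exact fun hj => h ⟨S, hS, hj⟩⟩)

variable (hcard : ∀ S ∈ BA, S.card = (m S).card)
  (hC : ((BA.biUnion id)ᶜ : Finset (Fin n)).card = ((BB.biUnion id)ᶜ : Finset (Fin n)).card)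

lemma glue_spec (hdA : ∀ S ∈ BA, ∀ S' ∈ BA, S ≠ S' → Disjoint S S') {S : Finset (Fin n)} (hS : S ∈ BA) {j : Fin n} (hj : j ∈ S) :
    glue BA BB m hcard hC j = ↑(Finset.equivOfCardEq (hcard S hS) ⟨j, hj⟩) := by
  have h : ∃ S ∈ BA, j ∈ S := ⟨S, hS, hj⟩
  have hbe : blkOf BA j = S := blkOf_eq BA hdA hS hj
  subst hbe
  rw [glue, dif_pos h]

lemma glue_mem_block (hdA : ∀ S ∈ BA, ∀ S' ∈ BA, S ≠ S' → Disjoint S S') {S : Finset (Fin n)} (hS : S ∈ BA) {j : Fin n} (hj : j ∈ S) :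
    glue BA BB m hcard hC j ∈ m S := by
  rw [glue_spec BA BB m hcard hC hdA hS hj]
  exact (Finset.equivOfCardEq (hcard S hS) ⟨j, hj⟩).2

lemma glue_mem_compl {j : Fin n} (h : ¬ ∃ S ∈ BA, j ∈ S) :
    glue BA BB m hcard hC j ∈ ((BB.biUnion id)ᶜ : Finset (Fin n)) := by
  rw [glue, dif_neg h]
  exact (Finset.equivOfCardEq hC _).2

lemma glue_inj (hdA : ∀ S ∈ BA, ∀ S' ∈ BA, S ≠ S' → Disjoint S S')
    (hdB : ∀ S ∈ BB, ∀ S' ∈ BB, S ≠ S' → Disjoint S S') (hmm : ∀ S ∈ BA, m S ∈ BB)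
    (hminj : ∀ S ∈ BA, ∀ S' ∈ BA, m S = m S' → S = S') :
    Function.Injective (glue BA BB m hcard hC) := by
  intro j j' he
  by_cases h1 : ∃ S ∈ BA, j ∈ S <;> by_cases h2 : ∃ S ∈ BA, j' ∈ S
  · obtain ⟨S, hS, hj⟩ := h1
    obtain ⟨S', hS', hj'⟩ := h2
    by_cases hSS : S = S'
    · subst hSS
      rw [glue_spec BA BB m hcard hC hdA hS hj,
        glue_spec BA BB m hcard hC hdA hS hj'] at he
      have := (Finset.equivOfCardEq (hcard S hS)).injective (Subtype.ext he)
      exact congrArg Subtype.val this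
    · exfalso
      have e1 := glue_mem_block BA BB m hcard hC hdA hS hj
      have e2 := glue_mem_block BA BB m hcard hC hdA hS' hj'
      rw [he] at e1
      have hmne : m S ≠ m S' := fun hcon => hSS (hminj S hS S' hS' hcon)
      exact Finset.disjoint_left.mp (hdB _ (hmm S hS) _ (hmm S' hS') hmne) e1 e2
  · exfalso
    obtain ⟨S, hS, hj⟩ := h1
    have e1 := glue_mem_block BA BB m hcard hC hdA hS hj
    have e2 := glue_mem_compl BA BB m hcard hC h2
    rw [he] at e1
    rw [Finset.mem_compl] at e2
    exact e2 (Finset.mem_biUnion.mpr ⟨m S, hmm S hS, e1⟩)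
  · exfalso
    obtain ⟨S, hS, hj⟩ := h2
    have e1 := glue_mem_block BA BB m hcard hC hdA hS hj
    have e2 := glue_mem_compl BA BB m hcard hC h1
    rw [← he] at e1
    rw [Finset.mem_compl] at e2
    exact e2 (Finset.mem_biUnion.mpr ⟨m S, hmm S hS, e1⟩)
  · rw [glue, dif_neg h1, glue, dif_neg h2] at he
    have := (Finset.equivOfCardEq hC).injective (Subtype.ext he)
    exact congrArg Subtype.val this

end Glue

end Cube


namespace Cube
variable {n : ℕ}

open Finset

lemma sign_logic (P N Q R C : Prop) (hC : C ↔ (P ∧ R) ∨ (N ∧ Q)) (h1 : ¬(P ∧ N))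
    (h2 : ¬(Q ∧ R)) (h3 : P ∨ N) (h4 : Q ∨ R) :
    ((P ∧ ¬C ∨ N ∧ C) ↔ Q) ∧ ((N ∧ ¬C ∨ P ∧ C) ↔ R) := by
  constructor <;> constructor <;> intro hh <;> tauto

set_option maxHeartbeats 1000000 in
lemma exists_aut {A B : Set (Cube n)} (hA : IsMRSub A) (hB : IsMRSub B)
    (htp : ∀ i, (typeSet A i).ncard = (typeSet B i).ncard) :
    ∃ φ : Cube n ≃o Cube n, IsAut φ ∧ φ '' coAt A = coAt B := by
  classical
  obtain ⟨BA, hBAdef⟩ : ∃ BA, BA = ((Set.toFinite (coAt A)).toFinset.image supp) := ⟨_, rfl⟩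
  obtain ⟨BB, hBBdef⟩ : ∃ BB, BB = ((Set.toFinite (coAt B)).toFinset.image supp) := ⟨_, rfl⟩
  -- choose a coatom for each block
  have hchA : ∀ S : Finset (Fin n), ∃ a : Cube n, S ∈ BA → a ∈ coAt A ∧ supp a = S := by
    intro S
    by_cases h : S ∈ BA
    · rw [hBAdef] at h
      obtain ⟨a, haK, haS⟩ := Finset.mem_image.mp h
      exact ⟨a, fun _ => ⟨(Set.Finite.mem_toFinset _).mp haK, haS⟩⟩
    · exact ⟨⊤, fun h' => absurd h' h⟩
  have hchB : ∀ S : Finset (Fin n), ∃ b : Cube n, S ∈ BB → b ∈ coAt B ∧ supp b = S := by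
    intro S
    by_cases h : S ∈ BB
    · rw [hBBdef] at h
      obtain ⟨b, hbK, hbS⟩ := Finset.mem_image.mp h
      exact ⟨b, fun _ => ⟨(Set.Finite.mem_toFinset _).mp hbK, hbS⟩⟩
    · exact ⟨⊤, fun h' => absurd h' h⟩
  choose aOf haOf using hchA
  choose bOf hbOf using hchB
  -- block disjointness
  have hdA : ∀ S ∈ BA, ∀ S' ∈ BA, S ≠ S' → Disjoint S S' := by
    intro S hS S' hS' hne
    have h1 := haOf S hS
    have h2 := haOf S' hS'
    have hane : aOf S ≠ aOf S' := fun h => hne (by rw [← h1.2, ← h2.2, h])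
    have hane2 : aOf S' ≠ alpha (aOf S) := fun h =>
      hne (by rw [← h1.2, ← h2.2, h, supp_alpha])
    have := coAt_supp_disj hA h1.1 h2.1 hane hane2
    rwa [h1.2, h2.2] at this
  have hdB : ∀ S ∈ BB, ∀ S' ∈ BB, S ≠ S' → Disjoint S S' := by
    intro S hS S' hS' hne
    have h1 := hbOf S hS
    have h2 := hbOf S' hS'
    have hane : bOf S ≠ bOf S' := fun h => hne (by rw [← h1.2, ← h2.2, h])
    have hane2 : bOf S' ≠ alpha (bOf S) := fun h =>
      hne (by rw [← h1.2, ← h2.2, h, supp_alpha])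
    have := coAt_supp_disj hB h1.1 h2.1 hane hane2
    rwa [h1.2, h2.2] at this
  -- equal filter cardinalities
  have hfil : ∀ i, (BA.filter (fun S => S.card = i)).card
      = (BB.filter (fun S => S.card = i)).card := by
    intro i
    have e1 := card_filter_supp hA i
    have e2 := card_filter_supp hB i
    have e3 := typeSet_ncard A i
    have e4 := typeSet_ncard B i
    have e5 := htp i
    rw [hBAdef, hBBdef]
    omega
  obtain ⟨m, hmbij, hmcard⟩ :=
    exists_card_matching Finset.card Finset.card BA.card BA BB rfl hfil
  have hmm : ∀ S ∈ BA, m S ∈ BB := fun S hS => hmbij.mapsTo hS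
  have hminj : ∀ S ∈ BA, ∀ S' ∈ BA, m S = m S' → S = S' := fun S hS S' hS' h =>
    hmbij.injOn hS hS' h
  have hcardm : ∀ S ∈ BA, S.card = (m S).card := fun S hS => (hmcard S hS).symm
  -- complements have equal size
  have hC : ((BA.biUnion id)ᶜ : Finset (Fin n)).card
      = ((BB.biUnion id)ᶜ : Finset (Fin n)).card := by
    have hUA : (BA.biUnion id).card = ∑ S ∈ BA, S.card := Finset.card_biUnion hdA
    have hUB : (BB.biUnion id).card = ∑ S ∈ BB, S.card := Finset.card_biUnion hdB
    have hsum : ∑ S ∈ BA, S.card = ∑ S ∈ BB, S.card :=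
      Finset.sum_bij (fun S _ => m S) (fun S hS => hmm S hS)
        (fun S hS S' hS' h => hminj S hS S' hS' h)
        (fun T hT => by
          obtain ⟨S, hS, hmS⟩ := hmbij.surjOn hT
          exact ⟨S, hS, hmS⟩)
        (fun S hS => hcardm S hS)
    rw [Finset.card_compl, Finset.card_compl, hUA, hUB, hsum]
  -- the permutation
  have hbij : Function.Bijective (glue BA BB m hcardm hC) :=
    Finite.injective_iff_bijective.mp (glue_inj BA BB m hcardm hC hdA hdB hmm hminj)
  obtain ⟨p, hpdef⟩ : ∃ p : Fin n ≃ Fin n, p = Equiv.ofBijective _ hbij := ⟨_, rfl⟩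
  have hpj : ∀ j, p j = glue BA BB m hcardm hC j := fun j => by rw [hpdef]; rfl
  -- the sign-flip set
  obtain ⟨s, hsdef⟩ : ∃ s : Finset (Fin n), s = Finset.univ.filter (fun j =>
      (∃ S ∈ BA, j ∈ S) ∧
      ((j ∈ (aOf (blkOf BA j)).pos ∧ p j ∈ (bOf (m (blkOf BA j))).neg) ∨
       (j ∈ (aOf (blkOf BA j)).neg ∧ p j ∈ (bOf (m (blkOf BA j))).pos))) := ⟨_, rfl⟩
  obtain ⟨φ, hφdef⟩ : ∃ φ : Cube n ≃o Cube n, φ = (flipIso s).trans (relabelIso p) := ⟨_, rfl⟩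
  have hφaut : IsAut φ := by
    rw [hφdef]; exact isAut_trans (flipIso_isAut s) (relabelIso_isAut p)
  -- key computation
  have hkey : ∀ S ∈ BA, φ (aOf S) = bOf (m S) := by
    intro S hS
    have ha := haOf S hS
    have hb := hbOf (m S) (hmm S hS)
    have hsa : ∀ j ∈ S,
        (j ∈ ((aOf S).pos \ s ∪ (aOf S).neg ∩ s) ↔ p j ∈ (bOf (m S)).pos) ∧
        (j ∈ ((aOf S).neg \ s ∪ (aOf S).pos ∩ s) ↔ p j ∈ (bOf (m S)).neg) := by
      intro j hj
      have hblk : blkOf BA j = S := blkOf_eq BA hdA hS hj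
      have hex : ∃ T ∈ BA, j ∈ T := ⟨S, hS, hj⟩
      have hsmem : j ∈ s ↔
          ((j ∈ (aOf S).pos ∧ p j ∈ (bOf (m S)).neg) ∨
           (j ∈ (aOf S).neg ∧ p j ∈ (bOf (m S)).pos)) := by
        rw [hsdef, Finset.mem_filter, hblk]
        constructor
        · exact fun h => h.2.2
        · exact fun h => ⟨Finset.mem_univ j, hex, h⟩
      have hpm : p j ∈ m S := by
        rw [hpj]
        exact glue_mem_block BA BB m hcardm hC hdA hS hj
      have h4 : p j ∈ (bOf (m S)).pos ∨ p j ∈ (bOf (m S)).neg := by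
        have : p j ∈ supp (bOf (m S)) := by rw [hb.2]; exact hpm
        exact Finset.mem_union.mp this
      have h3 : j ∈ (aOf S).pos ∨ j ∈ (aOf S).neg := by
        have : j ∈ supp (aOf S) := by rw [ha.2]; exact hj
        exact Finset.mem_union.mp this
      have h1 : ¬(j ∈ (aOf S).pos ∧ j ∈ (aOf S).neg) := fun h =>
        Finset.disjoint_left.mp (aOf S).disj h.1 h.2
      have h2 : ¬(p j ∈ (bOf (m S)).pos ∧ p j ∈ (bOf (m S)).neg) := fun h =>
        Finset.disjoint_left.mp (bOf (m S)).disj h.1 h.2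
      have hlogic := sign_logic (j ∈ (aOf S).pos) (j ∈ (aOf S).neg)
        (p j ∈ (bOf (m S)).pos) (p j ∈ (bOf (m S)).neg) (j ∈ s) hsmem h1 h2 h3 h4
      constructor
      · rw [Finset.mem_union, Finset.mem_sdiff, Finset.mem_inter]
        exact hlogic.1
      · rw [Finset.mem_union, Finset.mem_sdiff, Finset.mem_inter]
        exact hlogic.2
    have happ : φ (aOf S) = relabelFun p (flipFun s (aOf S)) := by
      rw [hφdef]; rfl
    have hsub : ∀ j, j ∈ ((aOf S).pos \ s ∪ (aOf S).neg ∩ s) ∪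
        ((aOf S).neg \ s ∪ (aOf S).pos ∩ s) → j ∈ S := by
      intro j hj
      rw [← ha.2]
      simp only [Finset.mem_union, Finset.mem_sdiff, Finset.mem_inter, supp] at hj ⊢
      tauto
    -- surjectivity of glue onto m S
    have hsurj : ∀ j' ∈ m S, ∃ j ∈ S, p j = j' := by
      intro j' hj'
      set jj := (Finset.equivOfCardEq (hcardm S hS)).symm ⟨j', hj'⟩ with hjj
      refine ⟨↑jj, jj.2, ?_⟩
      rw [hpj, glue_spec BA BB m hcardm hC hdA hS jj.2]
      have : (⟨↑jj, jj.2⟩ : {x // x ∈ S}) = jj := rfl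
      rw [this, hjj, Equiv.apply_symm_apply]
    apply Cube.ext
    · rw [happ]
      show ((aOf S).pos \ s ∪ (aOf S).neg ∩ s).map p.toEmbedding = (bOf (m S)).pos
      ext j'
      rw [Finset.mem_map]
      constructor
      · rintro ⟨j, hjmem, hje⟩
        have hjS : j ∈ S := hsub j (Finset.mem_union_left _ hjmem)
        have := (hsa j hjS).1.mp hjmem
        exact hje ▸ this
      · intro hj'
        have hj'm : j' ∈ m S := by
          have h5 : j' ∈ supp (bOf (m S)) := Finset.mem_union_left _ hj'
          rwa [hb.2] at h5
        obtain ⟨j, hjS, hje⟩ := hsurj j' hj'm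
        refine ⟨j, ?_, hje⟩
        exact (hsa j hjS).1.mpr (by rw [hje]; exact hj')
    · rw [happ]
      show ((aOf S).neg \ s ∪ (aOf S).pos ∩ s).map p.toEmbedding = (bOf (m S)).neg
      ext j'
      rw [Finset.mem_map]
      constructor
      · rintro ⟨j, hjmem, hje⟩
        have hjS : j ∈ S := hsub j (Finset.mem_union_right _ hjmem)
        have := (hsa j hjS).2.mp hjmem
        exact hje ▸ this
      · intro hj'
        have hj'm : j' ∈ m S := by
          have h5 : j' ∈ supp (bOf (m S)) := Finset.mem_union_right _ hj'
          rwa [hb.2] at h5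
        obtain ⟨j, hjS, hje⟩ := hsurj j' hj'm
        refine ⟨j, ?_, hje⟩
        exact (hsa j hjS).2.mpr (by rw [hje]; exact hj')
  have hkeyα : ∀ S ∈ BA, φ (alpha (aOf S)) = alpha (bOf (m S)) := by
    intro S hS
    rw [isAut_alpha_comm hφaut, hkey S hS]
  refine ⟨φ, hφaut, ?_⟩
  apply Set.Subset.antisymm
  · rintro _ ⟨a, ha, rfl⟩
    have hS : supp a ∈ BA := by
      rw [hBAdef]
      exact Finset.mem_image_of_mem supp ((Set.Finite.mem_toFinset _).mpr ha)
    have h1 := haOf (supp a) hS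
    rcases coAt_of_supp_eq hA h1.1 ha h1.2 with h | h
    · rw [h, hkey _ hS]
      exact (hbOf _ (hmm _ hS)).1
    · rw [h, hkeyα _ hS]
      exact alpha_coAt hB (hbOf _ (hmm _ hS)).1
  · intro b hb
    have hSb : supp b ∈ BB := by
      rw [hBBdef]
      exact Finset.mem_image_of_mem supp ((Set.Finite.mem_toFinset _).mpr hb)
    obtain ⟨S, hS, hmS⟩ := hmbij.surjOn hSb
    have hS' : S ∈ BA := hS
    have h2 := hbOf (m S) (hmm S hS')
    rcases coAt_of_supp_eq hB h2.1 hb (by rw [h2.2, hmS]) with h | h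
    · exact ⟨aOf S, (haOf S hS').1, by rw [hkey S hS', ← h]⟩
    · exact ⟨alpha (aOf S), alpha_coAt hA (haOf S hS').1, by rw [hkeyα S hS', ← h]⟩

end Cube





/-- Two MR-subalgebras of `𝓛ₙ` of the same type lie in the same orbit of
`Aut(𝓛ₙ)`. -/
theorem same_type_same_orbit (n : ℕ) (A B : Set (Cube n))
    (hA : Cube.IsMRSub A) (hB : Cube.IsMRSub B)
    (htp : ∀ i, (Cube.typeSet A i).ncard = (Cube.typeSet B i).ncard) :
    ∃ φ ∈ Cube.AutSet n, φ '' A = B := by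
  obtain ⟨φ, hφ, hco⟩ := Cube.exists_aut hA hB htp
  exact ⟨φ, hφ, Cube.image_eq_of_coAt φ hA hB hco⟩
end

section
/- Let v₁ and v₂ be elements of 𝓛ₙ of the same co-rank. Then there exists an automorphism φ of 𝓛ₙ with φ(v₁) = v₂. -/
namespace CubeAux
open Cube
variable {n : ℕ}

lemma le_def' {x y : Cube n} : x ≤ y ↔ y.pos ⊆ x.pos ∧ y.neg ⊆ x.neg := Iff.rfl

def flipFun (S : Finset (Fin n)) (x : Cube n) : Cube n :=
  ⟨(x.pos \ S) ∪ (x.neg ∩ S), (x.neg \ S) ∪ (x.pos ∩ S), by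
    have hd := x.disj
    rw [Finset.disjoint_left] at hd ⊢
    intro a ha hb
    simp only [Finset.mem_union, Finset.mem_sdiff, Finset.mem_inter] at ha hb
    rcases ha with ⟨h1, h2⟩ | ⟨h1, h2⟩ <;> rcases hb with ⟨h3, h4⟩ | ⟨h3, h4⟩ <;>
      first | exact h2 h4 | exact h4 h2 | exact hd h1 h3 | exact hd h3 h1⟩

lemma mem_flip_pos {S : Finset (Fin n)} {x : Cube n} {i : Fin n} :
    i ∈ (flipFun S x).pos ↔ (i ∈ x.pos ∧ i ∉ S) ∨ (i ∈ x.neg ∧ i ∈ S) := by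
  simp [flipFun, Finset.mem_union, Finset.mem_sdiff, Finset.mem_inter]

lemma mem_flip_neg {S : Finset (Fin n)} {x : Cube n} {i : Fin n} :
    i ∈ (flipFun S x).neg ↔ (i ∈ x.neg ∧ i ∉ S) ∨ (i ∈ x.pos ∧ i ∈ S) := by
  simp [flipFun, Finset.mem_union, Finset.mem_sdiff, Finset.mem_inter]

lemma flip_flip (S : Finset (Fin n)) (x : Cube n) : flipFun S (flipFun S x) = x := by
  ext i <;> simp only [mem_flip_pos, mem_flip_neg] <;> by_cases h : i ∈ S <;> tauto

lemma flip_mono (S : Finset (Fin n)) {x y : Cube n} (h : x ≤ y) :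
    flipFun S x ≤ flipFun S y := by
  obtain ⟨h1, h2⟩ := h
  constructor <;> intro i hi <;>
    simp only [mem_flip_pos, mem_flip_neg] at hi ⊢ <;>
    rcases hi with ⟨ha, hb⟩ | ⟨ha, hb⟩ <;>
    first
      | exact Or.inl ⟨h1 ha, hb⟩ | exact Or.inr ⟨h2 ha, hb⟩
      | exact Or.inl ⟨h2 ha, hb⟩ | exact Or.inr ⟨h1 ha, hb⟩

def flipIso (S : Finset (Fin n)) : Cube n ≃o Cube n where
  toFun := flipFun S
  invFun := flipFun S
  left_inv := flip_flip S
  right_inv := flip_flip S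
  map_rel_iff' := by
    intro a b
    constructor
    · intro h
      have h' : flipFun S a ≤ flipFun S b := h
      have := flip_mono S h'
      rwa [flip_flip, flip_flip] at this
    · exact flip_mono S

lemma flip_isAut (S : Finset (Fin n)) : IsAut (flipIso S) := by
  intro x y hle
  have h1 := hle.1; have h2 := hle.2
  have hxd := x.disj; rw [Finset.disjoint_left] at hxd
  have hyd := y.disj; rw [Finset.disjoint_left] at hyd
  show flipFun S (delta x y) = delta (flipFun S x) (flipFun S y)
  ext i <;>
    simp only [mem_flip_pos, mem_flip_neg, delta, Finset.mem_union, Finset.mem_sdiff] <;>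
    by_cases hS : i ∈ S <;> simp only [hS, not_true, not_false_iff, and_true, and_false,
      false_or, or_false]

def permFun (e : Fin n ≃ Fin n) (x : Cube n) : Cube n :=
  ⟨x.pos.map e.toEmbedding, x.neg.map e.toEmbedding, by
    rw [Finset.disjoint_left] at *
    intro a ha hb
    rw [Finset.mem_map_equiv] at ha hb
    have hd := x.disj
    rw [Finset.disjoint_left] at hd
    exact hd ha hb⟩

lemma mem_perm_pos {e : Fin n ≃ Fin n} {x : Cube n} {i : Fin n} :
    i ∈ (permFun e x).pos ↔ e.symm i ∈ x.pos := Finset.mem_map_equiv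

lemma mem_perm_neg {e : Fin n ≃ Fin n} {x : Cube n} {i : Fin n} :
    i ∈ (permFun e x).neg ↔ e.symm i ∈ x.neg := Finset.mem_map_equiv

lemma perm_perm (e f : Fin n ≃ Fin n) (x : Cube n) :
    permFun e (permFun f x) = permFun (f.trans e) x := by
  ext i <;> simp [mem_perm_pos, mem_perm_neg]

lemma perm_refl (x : Cube n) : permFun (Equiv.refl _) x = x := by
  ext i <;> simp [mem_perm_pos, mem_perm_neg]

lemma perm_mono (e : Fin n ≃ Fin n) {x y : Cube n} (h : x ≤ y) :
    permFun e x ≤ permFun e y := by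
  constructor <;> intro i hi <;>
    simp only [mem_perm_pos, mem_perm_neg] at hi ⊢
  · exact h.1 hi
  · exact h.2 hi

lemma perm_symm_perm (e : Fin n ≃ Fin n) (x : Cube n) :
    permFun e.symm (permFun e x) = x := by
  rw [perm_perm]; simp [perm_refl]

lemma perm_perm_symm (e : Fin n ≃ Fin n) (x : Cube n) :
    permFun e (permFun e.symm x) = x := by
  rw [perm_perm]; simp [perm_refl]

def permIso (e : Fin n ≃ Fin n) : Cube n ≃o Cube n where
  toFun := permFun e
  invFun := permFun e.symm
  left_inv := perm_symm_perm e
  right_inv := perm_perm_symm e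
  map_rel_iff' := by
    intro a b
    constructor
    · intro h
      have h' : permFun e a ≤ permFun e b := h
      have := perm_mono e.symm h'
      rwa [perm_symm_perm, perm_symm_perm] at this
    · exact perm_mono e

lemma perm_isAut (e : Fin n ≃ Fin n) : IsAut (permIso e) := by
  intro x y hle
  show permFun e (delta x y) = delta (permFun e x) (permFun e y)
  ext i <;>
    simp [mem_perm_pos, mem_perm_neg, delta, Finset.mem_union, Finset.mem_sdiff]

lemma aut_trans {φ ψ : Cube n ≃o Cube n} (hφ : IsAut φ) (hψ : IsAut ψ) :
    IsAut (φ.trans ψ) := by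
  intro x y hle
  simp only [OrderIso.trans_apply]
  rw [hφ x y hle, hψ (φ x) (φ y) (φ.monotone hle)]


lemma exists_equiv_mapsTo (s t : Finset (Fin n)) (h : s.card = t.card) :
    ∃ e : Fin n ≃ Fin n, ∀ i ∈ s, e i ∈ t := by
  classical
  have h2 : sᶜ.card = tᶜ.card := by
    rw [Finset.card_compl, Finset.card_compl, h]
  let e1 : {x // x ∈ s} ≃ {x // x ∈ t} := s.equivOfCardEq h
  let e2 : {x // x ∈ sᶜ} ≃ {x // x ∈ tᶜ} := sᶜ.equivOfCardEq h2
  let e2' : {x // ¬ x ∈ s} ≃ {x // ¬ x ∈ t} :=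
    (Equiv.subtypeEquivRight (fun x => (Finset.mem_compl (a := x)).symm)).trans
      (e2.trans (Equiv.subtypeEquivRight fun x => Finset.mem_compl))
  refine ⟨(Equiv.sumCompl (· ∈ s)).symm.trans
    ((e1.sumCongr e2').trans (Equiv.sumCompl (· ∈ t))), ?_⟩
  intro i hi
  simp only [Equiv.trans_apply, Equiv.sumCompl_symm_apply_of_pos (p := (· ∈ s)) hi,
    Equiv.sumCongr_apply, Sum.map_inl, Equiv.sumCompl_apply_inl]
  exact (e1 ⟨i, hi⟩).2

lemma flip_collapse (x : Cube n) :
    flipFun x.neg ⟨x.pos ∪ x.neg, ∅, by simp⟩ = x := by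
  have hd := x.disj; rw [Finset.disjoint_left] at hd
  ext i <;> simp only [mem_flip_pos, mem_flip_neg, Finset.mem_union,
    Finset.notMem_empty, false_and, or_false, false_or, and_false] <;>
    constructor <;> intro hh
  · rcases hh with ⟨hh1 | hh1, hh2⟩
    · exact hh1
    · exact absurd hh1 hh2
  · exact ⟨Or.inl hh, hd hh⟩
  · exact hh.2
  · exact ⟨Or.inr hh, hh⟩

end CubeAux

/-- Any two elements of `𝓛ₙ` of the same co-rank are related by an
automorphism of `𝓛ₙ`. -/
theorem aut_transitive_on_corank (n : ℕ) (v₁ v₂ : Cube n)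
    (h : Cube.corank v₁ = Cube.corank v₂) :
    ∃ φ ∈ Cube.AutSet n, φ v₁ = v₂ := by
  classical
  open CubeAux in
  obtain ⟨e, he⟩ := exists_equiv_mapsTo (v₁.pos ∪ v₁.neg) (v₂.pos ∪ v₂.neg) h
  refine ⟨(flipIso v₁.neg).trans ((permIso e).trans (flipIso v₂.neg)),
    aut_trans (flip_isAut _) (aut_trans (perm_isAut _) (flip_isAut _)), ?_⟩
  have h1 : flipFun v₁.neg v₁ = ⟨v₁.pos ∪ v₁.neg, ∅, by simp⟩ := by
    have h0 := congrArg (flipFun v₁.neg) (flip_collapse v₁)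
    rw [CubeAux.flip_flip] at h0
    exact h0.symm
  have hmap : (v₁.pos ∪ v₁.neg).map e.toEmbedding = v₂.pos ∪ v₂.neg := by
    apply Finset.eq_of_subset_of_card_le
    · intro i hi
      rw [Finset.mem_map_equiv] at hi
      have := he _ hi
      simpa using this
    · rw [Finset.card_map]
      exact le_of_eq (h.symm : (v₂.pos ∪ v₂.neg).card = (v₁.pos ∪ v₁.neg).card)
  have h2 : permFun e ⟨v₁.pos ∪ v₁.neg, ∅, by simp⟩
      = ⟨v₂.pos ∪ v₂.neg, ∅, by simp⟩ := by
    unfold permFun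
    ext i <;> simp [hmap]
  show flipFun v₂.neg (permFun e (flipFun v₁.neg v₁)) = v₂
  rw [h1, h2]
  exact flip_collapse v₂
end

section
/- Let L be a finite MR-algebra with top element 1, and let φ be a bijection of the set of coatoms of L satisfying φ(Δ(1,c)) = Δ(1, φ(c)) for every coatom c. Then there exists an automorphism Φ of L (an order automorphism with Φ(Δ(x,y)) = Δ(Φ(x), Φ(y)) whenever y ≤ x) such that Φ(c) = φ(c) for every coatom c. -/
/-- The derived binary operation `xy := Δ(1, Δ(x ∨ y, y)) ∨ y` of a cubic
algebra. -/
def cop {L : Type*} [SemilatticeSup L] [OrderTop L] (Δ : L → L → L) (x y : L) : L :=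
  Δ ⊤ (Δ (x ⊔ y) y) ⊔ y

/-- A cubic algebra: a join-semilattice with top, with a reflection operation
`Δ` satisfying the axioms (a)–(f). -/
structure CubicAlgebra (L : Type*) [SemilatticeSup L] [OrderTop L] where
  Δ : L → L → L
  ax_a : ∀ x y : L, y ≤ x → Δ x y ⊔ y = x
  ax_b : ∀ x y z : L, z ≤ y → y ≤ x → Δ x (Δ y z) = Δ (Δ x y) (Δ x z)
  ax_c : ∀ x y : L, y ≤ x → Δ x (Δ x y) = y
  ax_d : ∀ x y z : L, z ≤ y → y ≤ x → Δ x z ≤ Δ x y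
  ax_e : ∀ x y : L, cop Δ (cop Δ x y) y = x ⊔ y
  ax_f : ∀ x y z : L, cop Δ x (cop Δ y z) = cop Δ y (cop Δ x z)

/-- The Metropolis–Rota axiom: for `a, b < x`, `Δ(x,a) ∨ b < x` iff `a` and `b`
have no greatest lower bound. -/
def CubicAlgebra.IsMR {L : Type*} [SemilatticeSup L] [OrderTop L]
    (C : CubicAlgebra L) : Prop :=
  ∀ a b x : L, a < x → b < x → (C.Δ x a ⊔ b < x ↔ ¬∃ m : L, IsGLB {a, b} m)

namespace CubicAux
set_option linter.unusedSectionVars false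

variable {L : Type*} [SemilatticeSup L] [OrderTop L]

theorem delta_le (C : CubicAlgebra L) {x y : L} (h : y ≤ x) : C.Δ x y ≤ x :=
  le_sup_left.trans_eq (C.ax_a x y h)

theorem delta_self (C : CubicAlgebra L) (x : L) : C.Δ x x = x := by
  have h1 : C.Δ x x ≤ x := delta_le C le_rfl
  have h2 : C.Δ x (C.Δ x x) ≤ C.Δ x x := C.ax_d x x _ h1 le_rfl
  rw [C.ax_c x x le_rfl] at h2
  exact le_antisymm h1 h2

theorem sigma_mono (C : CubicAlgebra L) {a b : L} (h : a ≤ b) :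
    C.Δ ⊤ a ≤ C.Δ ⊤ b := C.ax_d ⊤ b a h le_top

theorem sigma_sigma (C : CubicAlgebra L) (a : L) : C.Δ ⊤ (C.Δ ⊤ a) = a :=
  C.ax_c ⊤ a le_top

theorem sigma_le_iff (C : CubicAlgebra L) {a b : L} :
    C.Δ ⊤ a ≤ b ↔ a ≤ C.Δ ⊤ b := by
  constructor
  · intro h
    have := sigma_mono C h
    rwa [sigma_sigma] at this
  · intro h
    have := sigma_mono C h
    rwa [sigma_sigma] at this

theorem sup_sigma (C : CubicAlgebra L) (a : L) : C.Δ ⊤ a ⊔ a = ⊤ :=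
  C.ax_a ⊤ a le_top

theorem exists_glb_of_clb [Finite L] {a b z : L} (hza : z ≤ a) (hzb : z ≤ b) :
    ∃ m : L, IsGLB {a, b} m := by
  obtain ⟨m, hm, hmax⟩ := Set.Finite.exists_maximalFor id {w : L | w ≤ a ∧ w ≤ b}
    (Set.toFinite _) ⟨z, hza, hzb⟩
  refine ⟨m, ?_, ?_⟩
  · rintro y (rfl | rfl)
    · exact hm.1
    · simp_all
  · intro w hw
    have hw' : w ⊔ m ∈ {w : L | w ≤ a ∧ w ≤ b} := by
      constructor
      · exact sup_le (hw (by simp)) hm.1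
      · exact sup_le (hw (by simp)) hm.2
    have := hmax hw' le_sup_right
    simp only [id] at this
    exact le_sup_left.trans this

theorem mr_sup_eq [Finite L] (C : CubicAlgebra L) (hMR : C.IsMR) {a b x : L}
    (ha : a ≤ x) (hb : b ≤ x) :
    C.Δ x a ⊔ b = x ↔ ∃ z : L, z ≤ a ∧ z ≤ b := by
  rcases eq_or_lt_of_le ha with rfl | ha'
  · rw [delta_self, sup_eq_left.2 hb]
    exact ⟨fun _ => ⟨b, hb, le_rfl⟩, fun _ => rfl⟩
  rcases eq_or_lt_of_le hb with rfl | hb'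
  · rw [sup_eq_right.2 (delta_le C ha)]
    exact ⟨fun _ => ⟨a, le_rfl, ha⟩, fun _ => rfl⟩
  have h := hMR a b x ha' hb'
  have hle : C.Δ x a ⊔ b ≤ x := sup_le (delta_le C ha'.le) hb'.le
  constructor
  · intro he
    have : ¬ (C.Δ x a ⊔ b < x) := by rw [he]; exact lt_irrefl x
    have hglb : ∃ m : L, IsGLB {a, b} m := by
      by_contra hc
      exact this (h.2 hc)
    obtain ⟨m, hm⟩ := hglb
    exact ⟨m, hm.1 (by simp), hm.1 (by simp)⟩
  · rintro ⟨z, hz1, hz2⟩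
    obtain ⟨m, hm⟩ := exists_glb_of_clb hz1 hz2
    by_contra hne
    exact (h.1 (lt_of_le_of_ne hle hne)) ⟨m, hm⟩


theorem coatom_sigma (C : CubicAlgebra L) {c : L} (hc : IsCoatom c) :
    IsCoatom (C.Δ ⊤ c) := by
  constructor
  · intro h
    have : C.Δ ⊤ (C.Δ ⊤ c) = C.Δ ⊤ ⊤ := by rw [h]
    rw [sigma_sigma, delta_self] at this
    exact hc.1 this
  · intro b hb
    have h1 : c ≤ C.Δ ⊤ b := by
      rw [← sigma_le_iff]
      exact hb.le.trans_eq rfl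
    rcases eq_or_lt_of_le h1 with he | hlt
    · exfalso
      have : C.Δ ⊤ c = C.Δ ⊤ (C.Δ ⊤ b) := by rw [← he]
      rw [sigma_sigma] at this
      exact hb.ne' this.symm
    · have := hc.2 _ hlt
      have h2 : C.Δ ⊤ (C.Δ ⊤ b) = C.Δ ⊤ ⊤ := by rw [this]
      rwa [sigma_sigma, delta_self] at h2

theorem no_clb_sigma [Finite L] (C : CubicAlgebra L) (hMR : C.IsMR) {c : L}
    (hc : IsCoatom c) : ¬ ∃ z : L, z ≤ c ∧ z ≤ C.Δ ⊤ c := by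
  rw [← mr_sup_eq C hMR le_top le_top]
  rw [sup_idem]
  exact (coatom_sigma C hc).1

theorem star [Finite L] (C : CubicAlgebra L) (hMR : C.IsMR) {u c : L}
    (hc : IsCoatom c) : (∃ z : L, z ≤ u ∧ z ≤ c) ↔ ¬ u ≤ C.Δ ⊤ c := by
  rw [← mr_sup_eq C hMR le_top le_top]
  constructor
  · intro h hu
    have : C.Δ ⊤ u ⊔ c = c := by
      rw [sup_eq_right, sigma_le_iff]
      exact hu
    rw [this] at h
    exact hc.1 h
  · intro h
    have h1 : ¬ C.Δ ⊤ u ≤ c := fun hh => h ((sigma_le_iff C).1 hh)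
    have : c < C.Δ ⊤ u ⊔ c := lt_of_le_of_ne le_sup_right (fun he => h1 (le_sup_left.trans he.ge))
    exact hc.2 _ this

theorem no_clb_reflect [Finite L] (C : CubicAlgebra L) (hMR : C.IsMR) {x y : L}
    (h : y < x) : ¬ ∃ z : L, z ≤ C.Δ x y ∧ z ≤ y := by
  rw [← mr_sup_eq C hMR (delta_le C h.le) h.le]
  rw [C.ax_c x y h.le, sup_idem]
  exact h.ne

theorem exists_coatom_ge [Finite L] {x : L} (hx : x ≠ ⊤) :
    ∃ c : L, IsCoatom c ∧ x ≤ c := by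
  obtain ⟨m, hm, hmax⟩ := Set.Finite.exists_maximalFor id {y : L | x ≤ y ∧ y ≠ ⊤}
    (Set.toFinite _) ⟨x, le_rfl, hx⟩
  refine ⟨m, ⟨hm.2, ?_⟩, hm.1⟩
  intro b hb
  by_contra hbt
  have : m = b := le_antisymm hb.le (hmax ⟨hm.1.trans hb.le, hbt⟩ hb.le)
  exact hb.ne this

/-- The set of coatoms above `x`. -/
def Scoat (x : L) : Set L := {c : L | IsCoatom c ∧ x ≤ c}

theorem sep [Finite L] (C : CubicAlgebra L) (hMR : C.IsMR) {x y : L} (h : x < y) :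
    ∃ c : L, IsCoatom c ∧ x ≤ c ∧ ¬ y ≤ c := by
  set u := C.Δ y x with hu
  have hnclb : ¬ ∃ z : L, z ≤ u ∧ z ≤ x := no_clb_reflect C hMR h
  have hne : C.Δ ⊤ x ⊔ u ≠ ⊤ := by
    intro he
    obtain ⟨z, hz1, hz2⟩ := (mr_sup_eq C hMR le_top le_top).1 he
    exact hnclb ⟨z, hz2, hz1⟩
  obtain ⟨c', hc', hge⟩ := exists_coatom_ge hne
  refine ⟨C.Δ ⊤ c', coatom_sigma C hc', ?_, ?_⟩
  · rw [← sigma_le_iff]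
    exact le_sup_left.trans hge
  · intro hy
    have hu_le : u ≤ y := delta_le C h.le
    exact no_clb_sigma C hMR hc' ⟨u, le_sup_right.trans hge, hu_le.trans hy⟩

theorem le_of_le_coatoms [Finite L] (C : CubicAlgebra L) (hMR : C.IsMR) {x z : L}
    (h : ∀ c : L, IsCoatom c → x ≤ c → z ≤ c) : z ≤ x := by
  by_contra hc
  have hlt : x < x ⊔ z := lt_of_le_of_ne le_sup_left (fun he => hc (le_sup_right.trans he.ge))
  obtain ⟨c, hcc, hxc, hnc⟩ := sep C hMR hlt
  exact hnc (sup_le hxc (h c hcc hxc))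

theorem Scoat_inj [Finite L] (C : CubicAlgebra L) (hMR : C.IsMR) {x y : L}
    (h : Scoat x = Scoat y) : x = y := by
  have h1 : x ≤ y := le_of_le_coatoms C hMR (fun c hc hyc => ((h ▸ (⟨hc, hyc⟩ : c ∈ Scoat y)) : c ∈ Scoat x).2)
  have h2 : y ≤ x := le_of_le_coatoms C hMR (fun c hc hxc => ((h ▸ (⟨hc, hxc⟩ : c ∈ Scoat x)) : c ∈ Scoat y).2)
  exact le_antisymm h1 h2

theorem le_iff_Scoat [Finite L] (C : CubicAlgebra L) (hMR : C.IsMR) {x y : L} :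
    x ≤ y ↔ Scoat y ⊆ Scoat x := by
  constructor
  · rintro h c ⟨hc, hyc⟩
    exact ⟨hc, h.trans hyc⟩
  · intro h
    exact le_of_le_coatoms C hMR (fun c hc hyc => (h ⟨hc, hyc⟩).2)


theorem reflect_le_sigma [Finite L] (C : CubicAlgebra L) (hMR : C.IsMR) {x y c : L}
    (hyx : y ≤ x) (hyc : y ≤ c) (hxc : ¬ x ≤ c) (hc : IsCoatom c) :
    C.Δ x y ≤ C.Δ ⊤ c := by
  obtain ⟨m, hm⟩ := exists_glb_of_clb hyx hyc
  have hmx : m ≤ x := hm.1 (by simp)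
  have hmc : m ≤ c := hm.1 (by simp)
  have hym : y ≤ m := hm.2 (by rintro w (rfl | rfl); exacts [hyx, by simpa using hyc])
  have hmlt : m < x := lt_of_le_of_ne hmx (fun he => hxc (he ▸ hmc))
  have key : C.Δ x m ≤ C.Δ ⊤ c := by
    by_contra hnc
    obtain ⟨t, ht1, ht2⟩ := (star C hMR hc).2 hnc
    have htm : t ≤ m := hm.2 (by
      rintro w (rfl | rfl)
      · exact ht1.trans (delta_le C hmx)
      · simpa using ht2)
    exact no_clb_reflect C hMR hmlt ⟨t, ht1, htm⟩
  exact (C.ax_d x m y hym hmx).trans key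

theorem sigma_mem_Scoat_reflect [Finite L] (C : CubicAlgebra L) (hMR : C.IsMR)
    {x y c : L} (h : y ≤ x) (hcy : c ∈ Scoat y) (hcx : c ∉ Scoat x) :
    C.Δ ⊤ c ∈ Scoat (C.Δ x y) := by
  obtain ⟨hc, hyc⟩ := hcy
  have hxc : ¬ x ≤ c := fun hxx => hcx ⟨hc, hxx⟩
  exact ⟨coatom_sigma C hc, reflect_le_sigma C hMR h hyc hxc hc⟩

theorem Scoat_delta [Finite L] (C : CubicAlgebra L) (hMR : C.IsMR) {x y : L}
    (h : y ≤ x) :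
    Scoat (C.Δ x y) = Scoat x ∪ (C.Δ ⊤) '' (Scoat y \ Scoat x) := by
  ext c
  constructor
  · intro hcd
    by_cases hcx : c ∈ Scoat x
    · exact Or.inl hcx
    · right
      have h2 : C.Δ ⊤ c ∈ Scoat (C.Δ x (C.Δ x y)) :=
        sigma_mem_Scoat_reflect C hMR (delta_le C h) hcd hcx
      rw [C.ax_c x y h] at h2
      have hsx : C.Δ ⊤ c ∉ Scoat x := by
        intro hmem
        exact no_clb_sigma C hMR hcd.1
          ⟨C.Δ x y, hcd.2, (delta_le C h).trans hmem.2⟩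
      exact ⟨C.Δ ⊤ c, ⟨h2, hsx⟩, sigma_sigma C c⟩
  · rintro (hcx | ⟨d, ⟨hdy, hdx⟩, rfl⟩)
    · exact ⟨hcx.1, (delta_le C h).trans hcx.2⟩
    · exact sigma_mem_Scoat_reflect C hMR h hdy hdx

theorem Scoat_coatom {c : L} (hc : IsCoatom c) : Scoat c = {c} := by
  ext d
  constructor
  · rintro ⟨hd, hcd⟩
    rcases eq_or_lt_of_le hcd with he | hlt
    · simp [he.symm]
    · exact absurd (hc.2 _ hlt) hd.1
  · rintro rfl
    exact ⟨hc, le_rfl⟩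

theorem Scoat_top : Scoat (⊤ : L) = ∅ := by
  ext c
  simp only [Scoat, Set.mem_setOf_eq, Set.mem_empty_iff_false, iff_false, not_and, top_le_iff]
  intro hc he
  exact hc.1 he

theorem realizeF [Finite L] (C : CubicAlgebra L) (hMR : C.IsMR) (T : Finset L)
    (hT1 : ∀ c ∈ T, IsCoatom c) (hT2 : ∀ c ∈ T, C.Δ ⊤ c ∉ T) :
    ∃ x : L, Scoat x = ↑T := by
  classical
  induction T using Finset.induction_on with
  | empty => exact ⟨⊤, by simp [Scoat_top]⟩
  | @insert c T' hcT ih =>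
    have hc : IsCoatom c := hT1 c (Finset.mem_insert_self c T')
    obtain ⟨x', hx'⟩ := ih (fun d hd => hT1 d (Finset.mem_insert_of_mem hd))
      (fun d hd hsd => hT2 d (Finset.mem_insert_of_mem hd) (Finset.mem_insert_of_mem hsd))
    have hx'sc : ¬ x' ≤ C.Δ ⊤ c := by
      intro hle
      have : C.Δ ⊤ c ∈ Scoat x' := ⟨coatom_sigma C hc, hle⟩
      rw [hx'] at this
      exact hT2 c (Finset.mem_insert_self c T') (Finset.mem_insert_of_mem this)
    obtain ⟨z, hz1, hz2⟩ := (star C hMR hc).2 hx'sc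
    obtain ⟨m, hm⟩ := exists_glb_of_clb hz1 hz2
    have hmx : m ≤ x' := hm.1 (by simp)
    have hmc : m ≤ c := hm.1 (by simp)
    refine ⟨m, ?_⟩
    ext d
    constructor
    · rintro ⟨hd, hmd⟩
      by_contra hdmem
      simp only [Finset.coe_insert, Set.mem_insert_iff, Finset.mem_coe] at hdmem
      push_neg at hdmem
      obtain ⟨hdc, hdT'⟩ := hdmem
      set t := C.Δ ⊤ (C.Δ d m) with hdef
      have htd : t ≤ C.Δ ⊤ d := sigma_mono C (delta_le C hmd)
      have hkey : ∀ e : L, IsCoatom e → m ≤ e → e ≠ d → t ≤ e := by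
        intro e he hme hed
        have hde : ¬ d ≤ e := by
          intro hh
          rcases eq_or_lt_of_le hh with h1 | h1
          · exact hed h1.symm
          · exact he.1 (hd.2 _ h1)
        have := reflect_le_sigma C hMR hmd hme hde he
        calc t ≤ C.Δ ⊤ (C.Δ ⊤ e) := sigma_mono C this
        _ = e := sigma_sigma C e
      have hrx : m ⊔ t ≤ x' := by
        apply le_of_le_coatoms C hMR
        intro e he hxe
        have heT' : e ∈ T' := by
          have : e ∈ Scoat x' := ⟨he, hxe⟩
          rwa [hx'] at this
        have hed : e ≠ d := fun hh => hdT' (hh ▸ heT')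
        exact sup_le (hmx.trans hxe) (hkey e he (hmx.trans hxe) hed)
      have hrc : m ⊔ t ≤ c := sup_le hmc (hkey c hc hmc (fun hh => hdc hh.symm))
      have hrm : m ⊔ t ≤ m := hm.2 (by rintro w (rfl | rfl); exacts [hrx, by simpa using hrc])
      have htm : t ≤ m := le_sup_right.trans hrm
      exact no_clb_sigma C hMR hd ⟨t, htm.trans hmd, htd⟩
    · intro hdm
      simp only [Finset.coe_insert, Set.mem_insert_iff, Finset.mem_coe] at hdm
      rcases hdm with rfl | hdT'
      · exact ⟨hc, hmc⟩
      · have : d ∈ Scoat x' := by rw [hx']; exact hdT'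
        exact ⟨this.1, hmx.trans this.2⟩

theorem realize [Finite L] (C : CubicAlgebra L) (hMR : C.IsMR) (T : Set L)
    (hT1 : ∀ c ∈ T, IsCoatom c) (hT2 : ∀ c ∈ T, C.Δ ⊤ c ∉ T) :
    ∃ x : L, Scoat x = T := by
  classical
  haveI := Fintype.ofFinite L
  obtain ⟨x, hx⟩ := realizeF C hMR T.toFinset
    (fun c hc => hT1 c (Set.mem_toFinset.1 hc))
    (fun c hc hsc => hT2 c (Set.mem_toFinset.1 hc) (Set.mem_toFinset.1 hsc))
  exact ⟨x, by rwa [Set.coe_toFinset] at hx⟩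


end CubicAux

open CubicAux in
/-- A `Δ(1,·)`-preserving bijection of the coatoms of a finite MR-algebra
extends to an automorphism. -/
theorem coatom_bijection_extends {L : Type*} [SemilatticeSup L] [OrderTop L]
    [Finite L] (C : CubicAlgebra L) (hMR : C.IsMR)
    (φ : L → L) (hbij : Set.BijOn φ {c : L | IsCoatom c} {c : L | IsCoatom c})
    (hΔ : ∀ c : L, IsCoatom c → φ (C.Δ ⊤ c) = C.Δ ⊤ (φ c)) :
    ∃ Φ : L ≃o L,
      (∀ x y : L, y ≤ x → Φ (C.Δ x y) = C.Δ (Φ x) (Φ y)) ∧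
        ∀ c : L, IsCoatom c → Φ c = φ c := by
  classical
  haveI : Nonempty L := ⟨⊤⟩
  set K : Set L := {c : L | IsCoatom c} with hK
  set ψ : L → L := Function.invFunOn φ K with hψdef
  have hinv : Set.InvOn ψ φ K K := hbij.invOn_invFunOn
  have hψbij : Set.BijOn ψ K K := Set.BijOn.symm hinv.symm hbij
  have hψσ : ∀ c ∈ K, ψ (C.Δ ⊤ c) = C.Δ ⊤ (ψ c) := by
    intro c hc
    have hσc : C.Δ ⊤ c ∈ K := coatom_sigma C hc
    have h1 : φ (ψ (C.Δ ⊤ c)) = C.Δ ⊤ c := hinv.2 hσc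
    have h2 : φ (C.Δ ⊤ (ψ c)) = C.Δ ⊤ c := by
      rw [hΔ _ (hψbij.mapsTo hc), hinv.2 hc]
    exact hbij.injOn (hψbij.mapsTo hσc) (coatom_sigma C (hψbij.mapsTo hc)) (h1.trans h2.symm)
  have hφσ : ∀ c ∈ K, φ (C.Δ ⊤ c) = C.Δ ⊤ (φ c) := fun c hc => hΔ c hc
  -- generic construction
  have build : ∀ (θ : L → L), Set.BijOn θ K K → (∀ c ∈ K, θ (C.Δ ⊤ c) = C.Δ ⊤ (θ c)) →
      ∃ Θ : L → L, ∀ x : L, Scoat (Θ x) = θ '' Scoat x := by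
    intro θ hθ hθσ
    have hKS : ∀ x : L, Scoat x ⊆ K := fun x c hc => hc.1
    have hex : ∀ x : L, ∃ z : L, Scoat z = θ '' Scoat x := by
      intro x
      apply realize C hMR
      · rintro c ⟨d, hd, rfl⟩
        exact hθ.mapsTo (hd.1)
      · rintro c ⟨d, hd, rfl⟩ ⟨d', hd', he⟩
        rw [← hθσ d hd.1] at he
        have : C.Δ ⊤ d = d' := hθ.injOn (coatom_sigma C hd.1) (hd'.1) he.symm
        exact no_clb_sigma C hMR hd.1 ⟨x, hd.2, this ▸ hd'.2⟩
    exact ⟨fun x => Classical.choose (hex x), fun x => Classical.choose_spec (hex x)⟩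
  obtain ⟨F, hF⟩ := build φ hbij hφσ
  obtain ⟨G, hG⟩ := build ψ hψbij hψσ
  have hGF : ∀ x : L, G (F x) = x := by
    intro x
    apply Scoat_inj C hMR
    rw [hG, hF, ← Set.image_comp]
    have : Set.EqOn (ψ ∘ φ) id (Scoat x) := fun c hc => hinv.1 hc.1
    rw [Set.image_congr this, Set.image_id]
  have hFG : ∀ x : L, F (G x) = x := by
    intro x
    apply Scoat_inj C hMR
    rw [hF, hG, ← Set.image_comp]
    have : Set.EqOn (φ ∘ ψ) id (Scoat x) := fun c hc => hinv.2 hc.1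
    rw [Set.image_congr this, Set.image_id]
  have himage_iff : ∀ x y : L, φ '' Scoat y ⊆ φ '' Scoat x ↔ Scoat y ⊆ Scoat x := by
    intro x y
    constructor
    · intro h c hc
      obtain ⟨c', hc', he⟩ := h ⟨c, hc, rfl⟩
      have : c' = c := hbij.injOn hc'.1 hc.1 he
      exact this ▸ hc'
    · exact Set.image_mono
  have hmap_le : ∀ x y : L, F x ≤ F y ↔ x ≤ y := by
    intro x y
    rw [le_iff_Scoat C hMR, le_iff_Scoat C hMR (x := x), hF, hF, himage_iff]
  refine ⟨⟨⟨F, G, hGF, hFG⟩, ?_⟩, ?_, ?_⟩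
  · intro a b
    exact hmap_le a b
  · -- Δ preservation
    intro x y h
    have hFyx : F y ≤ F x := (hmap_le y x).2 h
    apply Scoat_inj C hMR
    show Scoat (F (C.Δ x y)) = Scoat (C.Δ (F x) (F y))
    rw [hF, Scoat_delta C hMR h, Scoat_delta C hMR hFyx, hF, hF,
      Set.image_union]
    congr 1
    have hdiff : φ '' (Scoat y \ Scoat x) = φ '' Scoat y \ φ '' Scoat x := by
      ext d
      constructor
      · rintro ⟨c, ⟨hcy, hcx⟩, rfl⟩
        refine ⟨⟨c, hcy, rfl⟩, ?_⟩
        rintro ⟨c', hc', he⟩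
        exact hcx (hbij.injOn hc'.1 hcy.1 he ▸ hc')
      · rintro ⟨⟨c, hc, rfl⟩, hnx⟩
        exact ⟨c, ⟨hc, fun hcx => hnx ⟨c, hcx, rfl⟩⟩, rfl⟩
    rw [← hdiff, ← Set.image_comp, ← Set.image_comp]
    apply Set.image_congr
    intro c hc
    exact hφσ c hc.1.1
  · -- coatom clause
    intro c hc
    show F c = φ c
    apply Scoat_inj C hMR
    rw [hF, Scoat_coatom hc, Scoat_coatom (hbij.mapsTo hc), Set.image_singleton]
end

section
/- Let L be a cubic algebra and let a, b, c ∈ L with a ≤ b and a ≤ c. Then Δ(b ∨ c, b) ≤ c if and only if b ≤ c. -/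
/-- In a cubic algebra, if `a ≤ b` and `a ≤ c` then `b ⪯ c` iff `b ≤ c`. -/
theorem preceq_iff_le {L : Type*} [SemilatticeSup L] [OrderTop L]
    (C : CubicAlgebra L) (a b c : L) (hab : a ≤ b) (hac : a ≤ c) :
    C.Δ (b ⊔ c) b ≤ c ↔ b ≤ c := by
  constructor
  · intro h
    have ha : a ≤ b ⊔ c := hab.trans le_sup_left
    have h1 : C.Δ (b ⊔ c) a ≤ C.Δ (b ⊔ c) b := C.ax_d _ _ _ hab le_sup_left
    have h2 : C.Δ (b ⊔ c) a ⊔ a ≤ c := sup_le (h1.trans h) hac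
    rw [C.ax_a _ _ ha] at h2
    exact le_sup_left.trans h2
  · intro h
    have : b ⊔ c = c := sup_eq_right.mpr h
    rw [this]
    have := C.ax_a c b h
    calc C.Δ c b ≤ C.Δ c b ⊔ b := le_sup_left
      _ = c := this
end

section
/- The map (c, B) ↦ (c, B*) on locator pairs is a closure operator with respect to the locator-pair relation ≤: (i) (c, B) ≤ (c, B*) for every locator pair (c, B); (ii) if (c₁, B₁) ≤ (c₂, B₂) then (c₁, B₁*) ≤ (c₂, B₂*); (iii) (B*)* = B*, so the map is idempotent. -/
open scoped symmDiff

/-- An implication sublattice of the Boolean algebra `Finset (Fin n)`: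
a nonempty subset closed under relative implication `x → y = xᶜ ∪ y` and
under intersection. -/
def IsImpSub {n : ℕ} (B : Set (Finset (Fin n))) : Prop :=
  B.Nonempty ∧ (∀ x ∈ B, ∀ y ∈ B, xᶜ ∪ y ∈ B) ∧ (∀ x ∈ B, ∀ y ∈ B, x ∩ y ∈ B)

/-- `a` is the minimum of `B`. -/
def IsMinOf {n : ℕ} (B : Set (Finset (Fin n))) (a : Finset (Fin n)) : Prop :=
  a ∈ B ∧ ∀ b ∈ B, a ⊆ b

/-- The locator-pair relation: `(c₁, B₁) ≤ (c₂, B₂)` iff `B₁ ⊆ B₂` and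
`(c₁ Δ c₂) ∪ min B₁ ∈ B₂`. -/
def LocLe {n : ℕ} (c₁ : Finset (Fin n)) (B₁ : Set (Finset (Fin n)))
    (c₂ : Finset (Fin n)) (B₂ : Set (Finset (Fin n))) : Prop :=
  B₁ ⊆ B₂ ∧ ∃ a₁ : Finset (Fin n), IsMinOf B₁ a₁ ∧ (c₁ ∆ c₂) ∪ a₁ ∈ B₂

/-- `Bstar c B a` is the smallest implication sublattice containing `B ∪ {c}`
all of whose elements lie above `a = min B`, i.e. the Boolean subalgebra of
`[min B, Fin n]` generated by `B ∪ {c}`. -/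
def Bstar {n : ℕ} (c : Finset (Fin n)) (B : Set (Finset (Fin n)))
    (a : Finset (Fin n)) : Set (Finset (Fin n)) :=
  ⋂₀ {C : Set (Finset (Fin n)) | IsImpSub C ∧ B ⊆ C ∧ c ∈ C ∧ ∀ x ∈ C, a ⊆ x}

lemma impSub_union {n : ℕ} {S : Set (Finset (Fin n))} (hS : IsImpSub S)
    {x y : Finset (Fin n)} (hx : x ∈ S) (hy : y ∈ S) : x ∪ y ∈ S := by
  have h1 := hS.2.1 x hx y hy
  have h2 := hS.2.1 _ h1 y hy
  have he : (xᶜ ∪ y)ᶜ ∪ y = x ∪ y := by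
    ext t
    simp only [Finset.mem_union, Finset.mem_compl]
    tauto
  rwa [he] at h2

lemma impSub_symmDiff {n : ℕ} {S : Set (Finset (Fin n))} (hS : IsImpSub S)
    {x y a : Finset (Fin n)} (hx : x ∈ S) (hy : y ∈ S) (ha : a ∈ S)
    (hax : a ⊆ x) : (x ∆ y) ∪ a ∈ S := by
  have h1 : x ∪ y ∈ S := impSub_union hS hx hy
  have h2 : (x ∩ y)ᶜ ∪ a ∈ S := hS.2.1 _ (hS.2.2 x hx y hy) a ha
  have h3 := hS.2.2 _ h1 _ h2
  have he : (x ∪ y) ∩ ((x ∩ y)ᶜ ∪ a) = (x ∆ y) ∪ a := by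
    ext t
    have hax' := @hax t
    simp only [Finset.mem_union, Finset.mem_inter, Finset.mem_compl,
      Finset.mem_symmDiff] at *
    tauto
  rwa [he] at h3

/-- The key specification of `Bstar`. -/
lemma bstar_spec {n : ℕ} (c : Finset (Fin n)) (B : Set (Finset (Fin n)))
    (a : Finset (Fin n)) (hB : IsImpSub B) (ha : IsMinOf B a) (hac : a ⊆ c) :
    IsImpSub (Bstar c B a) ∧ B ⊆ Bstar c B a ∧ c ∈ Bstar c B a ∧
      ∀ x ∈ Bstar c B a, a ⊆ x := by
  have htop : {x : Finset (Fin n) | a ⊆ x} ∈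
      {C : Set (Finset (Fin n)) | IsImpSub C ∧ B ⊆ C ∧ c ∈ C ∧ ∀ x ∈ C, a ⊆ x} := by
    refine ⟨⟨⟨a, Finset.Subset.refl a⟩, ?_, ?_⟩, ?_, hac, fun x hx => hx⟩
    · intro x _ y hy
      exact hy.trans Finset.subset_union_right
    · intro x hx y hy
      exact Finset.subset_inter hx hy
    · intro b hb
      exact ha.2 b hb
  have hc : c ∈ Bstar c B a := fun C hC => hC.2.2.1
  refine ⟨⟨⟨c, hc⟩, ?_, ?_⟩, ?_, hc, ?_⟩
  · intro x hx y hy C hC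
    exact hC.1.2.1 x (hx C hC) y (hy C hC)
  · intro x hx y hy C hC
    exact hC.1.2.2 x (hx C hC) y (hy C hC)
  · intro b hb C hC
    exact hC.2.1 hb
  · intro x hx
    exact hx _ htop

lemma bstar_min {n : ℕ} (c : Finset (Fin n)) (B : Set (Finset (Fin n)))
    (a : Finset (Fin n)) (hB : IsImpSub B) (ha : IsMinOf B a) (hac : a ⊆ c) :
    IsMinOf (Bstar c B a) a := by
  obtain ⟨_, hsub, _, hupper⟩ := bstar_spec c B a hB ha hac
  exact ⟨hsub ha.1, hupper⟩

/-- The map `(c, B) ↦ (c, B*)` is a closure operator on locator pairs. -/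
theorem bstar_closure_operator (n : ℕ) :
    (∀ (c : Finset (Fin n)) (B : Set (Finset (Fin n))) (a : Finset (Fin n)),
        IsImpSub B → IsMinOf B a → a ⊆ c → LocLe c B c (Bstar c B a)) ∧
      (∀ (c₁ : Finset (Fin n)) (B₁ : Set (Finset (Fin n))) (a₁ : Finset (Fin n))
          (c₂ : Finset (Fin n)) (B₂ : Set (Finset (Fin n))) (a₂ : Finset (Fin n)),
        IsImpSub B₁ → IsMinOf B₁ a₁ → a₁ ⊆ c₁ →
        IsImpSub B₂ → IsMinOf B₂ a₂ → a₂ ⊆ c₂ →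
        LocLe c₁ B₁ c₂ B₂ → LocLe c₁ (Bstar c₁ B₁ a₁) c₂ (Bstar c₂ B₂ a₂)) ∧
      (∀ (c : Finset (Fin n)) (B : Set (Finset (Fin n))) (a : Finset (Fin n)),
        IsImpSub B → IsMinOf B a → a ⊆ c →
        Bstar c (Bstar c B a) a = Bstar c B a) := by
  refine ⟨?_, ?_, ?_⟩
  · -- extensivity
    intro c B a hB ha hac
    obtain ⟨hS, hsub, hc, hupper⟩ := bstar_spec c B a hB ha hac
    refine ⟨hsub, a, ha, ?_⟩
    have : (c ∆ c) ∪ a = a := by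
      rw [symmDiff_self]
      simp
    rw [this]
    exact hsub ha.1
  · -- monotonicity
    intro c₁ B₁ a₁ c₂ B₂ a₂ hB₁ ha₁ hac₁ hB₂ ha₂ hac₂ hle
    obtain ⟨hsub12, a₁', ha₁', hd'⟩ := hle
    have haeq : a₁' = a₁ :=
      Finset.Subset.antisymm (ha₁'.2 a₁ ha₁.1) (ha₁.2 a₁' ha₁'.1)
    rw [haeq] at hd'
    obtain ⟨hS₂, hsub₂, hc₂, hupper₂⟩ := bstar_spec c₂ B₂ a₂ hB₂ ha₂ hac₂
    -- elements of Bstar c₂ B₂ a₂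
    have hdS : (c₁ ∆ c₂) ∪ a₁ ∈ Bstar c₂ B₂ a₂ := hsub₂ hd'
    have hc2S : c₂ ∈ Bstar c₂ B₂ a₂ := hc₂
    have ha1S : a₁ ∈ Bstar c₂ B₂ a₂ := hsub₂ (hsub12 ha₁.1)
    have ha2a1 : a₂ ⊆ a₁ := ha₂.2 a₁ (hsub12 ha₁.1)
    have ha2S : a₂ ∈ Bstar c₂ B₂ a₂ := hsub₂ ha₂.1
    have heS : (c₂ ∆ ((c₁ ∆ c₂) ∪ a₁)) ∪ a₂ ∈ Bstar c₂ B₂ a₂ :=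
      impSub_symmDiff hS₂ hc2S hdS ha2S hac₂
    have hc1S : c₁ ∈ Bstar c₂ B₂ a₂ := by
      have h := impSub_union hS₂ heS ha1S
      have he : ((c₂ ∆ ((c₁ ∆ c₂) ∪ a₁)) ∪ a₂) ∪ a₁ = c₁ := by
        ext t
        have h1 := @ha2a1 t
        have h2 := @hac₁ t
        simp only [Finset.mem_union, Finset.mem_symmDiff] at *
        tauto
      rwa [he] at h
    -- the restricted set
    have hCmem : {x | x ∈ Bstar c₂ B₂ a₂ ∧ a₁ ⊆ x} ∈
        {C : Set (Finset (Fin n)) |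
          IsImpSub C ∧ B₁ ⊆ C ∧ c₁ ∈ C ∧ ∀ x ∈ C, a₁ ⊆ x} := by
      refine ⟨⟨⟨c₁, hc1S, hac₁⟩, ?_, ?_⟩, ?_, ⟨hc1S, hac₁⟩, fun x hx => hx.2⟩
      · intro x hx y hy
        exact ⟨hS₂.2.1 x hx.1 y hy.1, hy.2.trans Finset.subset_union_right⟩
      · intro x hx y hy
        exact ⟨hS₂.2.2 x hx.1 y hy.1, Finset.subset_inter hx.2 hy.2⟩
      · intro b hb
        exact ⟨hsub₂ (hsub12 hb), ha₁.2 b hb⟩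
    have hsubStar : Bstar c₁ B₁ a₁ ⊆ Bstar c₂ B₂ a₂ := by
      intro x hx
      exact (hx _ hCmem).1
    exact ⟨hsubStar, a₁, bstar_min c₁ B₁ a₁ hB₁ ha₁ hac₁, hdS⟩
  · -- idempotence
    intro c B a hB ha hac
    obtain ⟨hS, hsub, hc, hupper⟩ := bstar_spec c B a hB ha hac
    apply Set.Subset.antisymm
    · exact Set.sInter_subset_of_mem ⟨hS, Set.Subset.refl _, hc, hupper⟩
    · intro x hx C hC
      exact hx C ⟨hC.1, fun b hb => hC.2.1 (hsub hb), hC.2.2⟩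
end
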